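/- arXiv:2508.12034 — 5 statements merged into one kernel-verified Lean document; each statement's English description precedes it below -/
import Mathlib

section
/- For integers r ≥ 2 and n ≥ r, the number of edges of Y_r(n) satisfies e(Y_r(n)) ≥ (1 − 1/r)·n²/2 − n/r − r/8 + 1. -/
open SimpleGraph

noncomputable section

/-- The generalized book graph `B_{r,k} = K_r ∨ kK₁`: every vertex of a complete graph
on `r` vertices is joined to every vertex of an independent set of size `k`. -/
def genBook (r k : ℕ) : SimpleGraph (Fin r ⊕ Fin k) where
  Adj x y := x ≠ y ∧ (x.isLeft = true ∨ y.isLeft = true)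
  symm := ⟨fun x y h => ⟨h.1.symm, h.2.symm⟩⟩
  loopless := ⟨fun x h => h.1 rfl⟩

/-- `G` contains no subgraph isomorphic to `H` (i.e. `G` is `H`-free). -/
def IsHFree {α β : Type*} (H : SimpleGraph α) (G : SimpleGraph β) : Prop :=
  ¬ ∃ f : α ↪ β, ∀ a b, H.Adj a b → G.Adj (f a) (f b)

open Classical in
/-- The real adjacency matrix of a graph on `Fin n`. -/
def adjMat {n : ℕ} (G : SimpleGraph (Fin n)) : Matrix (Fin n) (Fin n) ℝ :=
  Matrix.of fun i j => if G.Adj i j then (1 : ℝ) else 0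

/-- The spectral radius of `G`: the largest eigenvalue of its adjacency matrix. -/
def specRad {n : ℕ} (G : SimpleGraph (Fin n)) : ℝ :=
  sSup {t : ℝ | ∃ x : Fin n → ℝ, x ≠ 0 ∧ (adjMat G).mulVec x = t • x}

/-- The number of edges of `G`. -/
def edgeCount {n : ℕ} (G : SimpleGraph (Fin n)) : ℕ := G.edgeSet.ncard

/-- The number of edges of `G` with both endpoints in `S`. -/
def edgesIn {n : ℕ} (G : SimpleGraph (Fin n)) (S : Set (Fin n)) : ℕ :=
  {e ∈ G.edgeSet | ∀ v ∈ e, v ∈ S}.ncard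

/-- Given a partition of the vertices into `r` parts (encoded by `P : Fin n → Fin r`),
the number `Σ_{1 ≤ i < j ≤ r} e(V_i, V_j)` of crossing edges: each crossing edge is
counted once, ordered so that the part index increases. -/
def crossPairs {n r : ℕ} (G : SimpleGraph (Fin n)) (P : Fin n → Fin r) : ℕ :=
  {p : Fin n × Fin n | G.Adj p.1 p.2 ∧ P p.1 < P p.2}.ncard

/-- `P` maximizes the number of crossing edges among all partitions into `r` parts. -/
def MaxCrossPartition {n r : ℕ} (G : SimpleGraph (Fin n)) (P : Fin n → Fin r) : Prop :=
  ∀ Q : Fin n → Fin r, crossPairs G Q ≤ crossPairs G P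

/-- Degree of `v` in `G`. -/
def deg {n : ℕ} (G : SimpleGraph (Fin n)) (v : Fin n) : ℕ := (G.neighborSet v).ncard

/-- Number of neighbours of `v` inside `S`. -/
def degIn {n : ℕ} (G : SimpleGraph (Fin n)) (v : Fin n) (S : Set (Fin n)) : ℕ :=
  (G.neighborSet v ∩ S).ncard

/-- The graph `Y_r(n)`: obtained from the Turán graph `T_r(n)` (parts = residue classes
mod `r`, with `T₁` the class of `r-1`, of size `⌊n/r⌋`, and `T₂` the class of `0`, of size
`⌈n/r⌉`) by adding the edge between `u = 0` and `w = r` inside `T₂`, deleting the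
`⌊n/r⌋ - 1` edges between `u` and `T₁ \ {r-1}` and the edge between `w` and `r-1`,
so that `u` and `w` have no common neighbour in `T₁`. -/
def yGraph (r n : ℕ) : SimpleGraph (Fin n) :=
  SimpleGraph.fromRel (fun a b =>
    ((a : ℕ) % r ≠ (b : ℕ) % r
      ∧ ¬ ((a : ℕ) = 0 ∧ (b : ℕ) % r = r - 1 ∧ (b : ℕ) ≠ r - 1)
      ∧ ¬ ((b : ℕ) = 0 ∧ (a : ℕ) % r = r - 1 ∧ (a : ℕ) ≠ r - 1)
      ∧ ¬ ((a : ℕ) = r ∧ (b : ℕ) = r - 1)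
      ∧ ¬ ((b : ℕ) = r ∧ (a : ℕ) = r - 1))
    ∨ ((a : ℕ) = 0 ∧ (b : ℕ) = r) ∨ ((a : ℕ) = r ∧ (b : ℕ) = 0))

/-- `G` attains the maximum spectral radius among all non-`r`-partite `B_{r,k}`-free
graphs of order `n`. -/
def IsExtremal (r k n : ℕ) (G : SimpleGraph (Fin n)) : Prop :=
  ¬ G.Colorable r ∧ IsHFree (genBook r k) G ∧
    ∀ G' : SimpleGraph (Fin n), ¬ G'.Colorable r → IsHFree (genBook r k) G' →
      specRad G' ≤ specRad G

/-- The set `L` of vertices of small degree: `d(v) ≤ (1 - 1/r - 5√ε)n`. -/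
def Lset {n : ℕ} (r : ℕ) (ε : ℝ) (G : SimpleGraph (Fin n)) : Set (Fin n) :=
  {v | (deg G v : ℝ) ≤ (1 - 1/(r : ℝ) - 5 * Real.sqrt ε) * n}

/-- The set `W = ∪ᵢ Wᵢ` where `Wᵢ = {v ∈ Vᵢ : d_{Vᵢ}(v) ≥ 3√ε·n}`. -/
def Wset {n r : ℕ} (ε : ℝ) (G : SimpleGraph (Fin n)) (P : Fin n → Fin r) : Set (Fin n) :=
  {v | 3 * Real.sqrt ε * n ≤ (degIn G v (P ⁻¹' {P v}) : ℝ)}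

end

section Stmt1Aux

open Finset

private abbrev RelN (r a b : ℕ) : Prop :=
  (a % r ≠ b % r
      ∧ ¬ (a = 0 ∧ b % r = r - 1 ∧ b ≠ r - 1)
      ∧ ¬ (b = 0 ∧ a % r = r - 1 ∧ a ≠ r - 1)
      ∧ ¬ (a = r ∧ b = r - 1)
      ∧ ¬ (b = r ∧ a = r - 1))
    ∨ (a = 0 ∧ b = r) ∨ (a = r ∧ b = 0)

private def FN (r a b : ℕ) : ℕ :=
  if a ≠ b ∧ (RelN r a b ∨ RelN r b a) then 1 else 0

private lemma master_ineq {r : ℕ} (hr : 2 ≤ r) (a b : ℕ) :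
    FN r a b + (if b % r = a % r then 1 else 0)
      + (if a = 0 ∧ b % r = r - 1 ∧ b ≠ r - 1 then 1 else 0)
      + (if b = 0 ∧ a % r = r - 1 ∧ a ≠ r - 1 then 1 else 0)
      + (if a = r ∧ b = r - 1 then 1 else 0)
      + (if b = r ∧ a = r - 1 then 1 else 0)
    = 1 + ((if a = 0 ∧ b = r then 1 else 0) + (if a = r ∧ b = 0 then 1 else 0)) := by
  by_cases hxy : b % r = a % r
  · have hc2 : ¬(a = 0 ∧ b % r = r - 1 ∧ b ≠ r - 1) := by
      rintro ⟨h1, h2, -⟩; rw [h1, Nat.zero_mod] at hxy; omega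
    have hc3 : ¬(b = 0 ∧ a % r = r - 1 ∧ a ≠ r - 1) := by
      rintro ⟨h1, h2, -⟩; rw [h1, Nat.zero_mod] at hxy; omega
    have hc4 : ¬(a = r ∧ b = r - 1) := by
      rintro ⟨h1, h2⟩
      rw [h1, Nat.mod_self, h2, Nat.mod_eq_of_lt (show r - 1 < r by omega)] at hxy
      omega
    have hc5 : ¬(b = r ∧ a = r - 1) := by
      rintro ⟨h1, h2⟩
      rw [h1, Nat.mod_self, h2, Nat.mod_eq_of_lt (show r - 1 < r by omega)] at hxy
      omega
    rw [if_pos hxy, if_neg hc2, if_neg hc3, if_neg hc4, if_neg hc5]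
    by_cases he1 : a = 0 ∧ b = r
    · obtain ⟨ha', hb'⟩ := he1
      have he2 : ¬(a = r ∧ b = 0) := by rintro ⟨h4, h5⟩; omega
      have hFN : FN r a b = 1 := by
        unfold FN
        exact if_pos ⟨by omega, Or.inl (Or.inr (Or.inl ⟨ha', hb'⟩))⟩
      rw [hFN, if_pos ⟨ha', hb'⟩, if_neg he2]
    · by_cases he2 : a = r ∧ b = 0
      · obtain ⟨ha', hb'⟩ := he2
        have hFN : FN r a b = 1 := by
          unfold FN
          exact if_pos ⟨by omega, Or.inl (Or.inr (Or.inr ⟨ha', hb'⟩))⟩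
        rw [hFN, if_neg he1, if_pos ⟨ha', hb'⟩]
      · have hFN : FN r a b = 0 := by
          unfold FN
          refine if_neg ?_
          rintro ⟨hne, ((⟨h1, -⟩ | h | h) | (⟨h1, -⟩ | h | h))⟩
          · exact h1 hxy.symm
          · exact he1 h
          · exact he2 h
          · exact h1 hxy
          · exact he2 ⟨h.2, h.1⟩
          · exact he1 ⟨h.2, h.1⟩
        rw [hFN, if_neg he1, if_neg he2]
  · have he1 : ¬(a = 0 ∧ b = r) := by
      rintro ⟨h1, h2⟩; exact hxy (by rw [h2, Nat.mod_self, h1, Nat.zero_mod])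
    have he2 : ¬(a = r ∧ b = 0) := by
      rintro ⟨h1, h2⟩; exact hxy (by rw [h2, Nat.zero_mod, h1, Nat.mod_self])
    rw [if_neg hxy, if_neg he1, if_neg he2]
    by_cases hc2 : a = 0 ∧ b % r = r - 1 ∧ b ≠ r - 1
    · obtain ⟨h1, h2, h3⟩ := hc2
      have hc3 : ¬(b = 0 ∧ a % r = r - 1 ∧ a ≠ r - 1) := by
        rintro ⟨-, h5, -⟩
        have : a % r = 0 := by rw [h1, Nat.zero_mod]
        omega
      have hc4 : ¬(a = r ∧ b = r - 1) := by rintro ⟨h4, -⟩; omega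
      have hc5 : ¬(b = r ∧ a = r - 1) := by
        rintro ⟨h4, -⟩
        have : b % r = 0 := by rw [h4, Nat.mod_self]
        omega
      have hFN : FN r a b = 0 := by
        unfold FN
        refine if_neg ?_
        rintro ⟨-, ((⟨-, hn2, -⟩ | h | h) | (⟨-, -, hn2, -⟩ | h | h))⟩
        · exact hn2 ⟨h1, h2, h3⟩
        · exact he1 h
        · exact he2 h
        · exact hn2 ⟨h1, h2, h3⟩
        · exact he2 ⟨h.2, h.1⟩
        · exact he1 ⟨h.2, h.1⟩
      rw [hFN, if_pos ⟨h1, h2, h3⟩, if_neg hc3, if_neg hc4, if_neg hc5]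
    · by_cases hc3 : b = 0 ∧ a % r = r - 1 ∧ a ≠ r - 1
      · obtain ⟨h1, h2, h3⟩ := hc3
        have hc4 : ¬(a = r ∧ b = r - 1) := by
          rintro ⟨h4, -⟩
          have : a % r = 0 := by rw [h4, Nat.mod_self]
          omega
        have hc5 : ¬(b = r ∧ a = r - 1) := by rintro ⟨h4, -⟩; omega
        have hFN : FN r a b = 0 := by
          unfold FN
          refine if_neg ?_
          rintro ⟨-, ((⟨-, -, hn3, -⟩ | h | h) | (⟨-, hn3, -⟩ | h | h))⟩
          · exact hn3 ⟨h1, h2, h3⟩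
          · exact he1 h
          · exact he2 h
          · exact hn3 ⟨h1, h2, h3⟩
          · exact he2 ⟨h.2, h.1⟩
          · exact he1 ⟨h.2, h.1⟩
        rw [hFN, if_neg hc2, if_pos ⟨h1, h2, h3⟩, if_neg hc4, if_neg hc5]
      · by_cases hc4 : a = r ∧ b = r - 1
        · obtain ⟨h1, h2⟩ := hc4
          have hc5 : ¬(b = r ∧ a = r - 1) := by rintro ⟨h4, -⟩; omega
          have hFN : FN r a b = 0 := by
            unfold FN
            refine if_neg ?_
            rintro ⟨-, ((⟨-, -, -, hn4, -⟩ | h | h) | (⟨-, -, -, -, hn4⟩ | h | h))⟩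
            · exact hn4 ⟨h1, h2⟩
            · exact he1 h
            · exact he2 h
            · exact hn4 ⟨h1, h2⟩
            · exact he2 ⟨h.2, h.1⟩
            · exact he1 ⟨h.2, h.1⟩
          rw [hFN, if_neg hc2, if_neg hc3, if_pos ⟨h1, h2⟩, if_neg hc5]
        · by_cases hc5 : b = r ∧ a = r - 1
          · obtain ⟨h1, h2⟩ := hc5
            have hFN : FN r a b = 0 := by
              unfold FN
              refine if_neg ?_
              rintro ⟨-, ((⟨-, -, -, -, hn5⟩ | h | h) | (⟨-, -, -, hn5, -⟩ | h | h))⟩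
              · exact hn5 ⟨h1, h2⟩
              · exact he1 h
              · exact he2 h
              · exact hn5 ⟨h1, h2⟩
              · exact he2 ⟨h.2, h.1⟩
              · exact he1 ⟨h.2, h.1⟩
            rw [hFN, if_neg hc2, if_neg hc3, if_neg hc4, if_pos ⟨h1, h2⟩]
          · have hFN : FN r a b = 1 := by
              unfold FN
              refine if_pos ⟨?_, Or.inl (Or.inl ⟨fun h => hxy h.symm, hc2, hc3, hc4, hc5⟩)⟩
              intro h
              exact hxy (by rw [h])
            rw [hFN, if_neg hc2, if_neg hc3, if_neg hc4, if_neg hc5]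

private lemma mod_succ' {r : ℕ} (hr : 2 ≤ r) (n : ℕ) :
    (n + 1) % r = if n % r = r - 1 then 0 else n % r + 1 := by
  have h1 : (n + 1) % r = (n % r + 1) % r := by
    conv_lhs => rw [Nat.add_mod]
    rw [Nat.one_mod_eq_one.mpr (by omega)]
  have h2 : n % r < r := Nat.mod_lt _ (by omega)
  split_ifs with h
  · rw [h1]
    have h3 : n % r + 1 = r := by omega
    rw [h3, Nat.mod_self]
  · rw [h1, Nat.mod_eq_of_lt (by omega)]

private lemma div_succ' {r : ℕ} (hr : 2 ≤ r) (n : ℕ) :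
    (n + 1) / r = if n % r = r - 1 then n / r + 1 else n / r := by
  have h2 : n % r < r := Nat.mod_lt _ (by omega)
  have hdvd : r ∣ (n + 1) ↔ n % r = r - 1 := by
    rw [Nat.dvd_iff_mod_eq_zero, mod_succ' hr]
    split_ifs with h
    · simp [h]
    · simp [h]
  by_cases h : n % r = r - 1
  · rw [if_pos h, Nat.succ_div_of_dvd (hdvd.mpr h)]
  · rw [if_neg h, Nat.succ_div_of_not_dvd (fun hc => h (hdvd.mp hc))]

private lemma cnt_eq {r : ℕ} (hr : 2 ≤ r) (i : ℕ) (hi : i < r) (n : ℕ) :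
    #{a ∈ range n | a % r = i} = n / r + if i < n % r then 1 else 0 := by
  induction n with
  | zero => simp
  | succ n ih =>
    rw [range_add_one, filter_insert, div_succ' hr, mod_succ' hr]
    have h2 : n % r < r := Nat.mod_lt _ (by omega)
    by_cases h : n % r = i
    · rw [if_pos h, card_insert_of_notMem (by simp), ih]
      split_ifs <;> omega
    · rw [if_neg h, ih]
      split_ifs <;> omega

private lemma sum_ite_and_left {n : ℕ} (P : ℕ → Prop) [DecidablePred P] (c : ℕ) (a : ℕ) :
    (∑ b ∈ Finset.range n, if a = c ∧ P b then 1 else 0)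
      = if a = c then (∑ b ∈ Finset.range n, if P b then 1 else 0) else 0 := by
  by_cases h : a = c
  · rw [if_pos h]
    exact Finset.sum_congr rfl fun b _ => if_congr ⟨fun x => x.2, fun x => ⟨h, x⟩⟩ rfl rfl
  · rw [if_neg h]
    exact Finset.sum_eq_zero fun b _ => if_neg fun hh => h hh.1

private lemma sum_ite_and_right {n : ℕ} (Q : Prop) [Decidable Q] (c : ℕ) :
    (∑ b ∈ Finset.range n, if b = c ∧ Q then 1 else 0) = if c < n ∧ Q then 1 else 0 := by
  by_cases hq : Q
  · simp only [hq, and_true]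
    rw [Finset.sum_ite_eq' (Finset.range n) c (fun _ => 1)]
    simp [Finset.mem_range]
  · simp [hq]

end Stmt1Aux

/-- For integers `r ≥ 2` and `n ≥ r`,
`e(Y_r(n)) ≥ (1 - 1/r)·n²/2 - n/r - r/8 + 1`. -/
theorem stmt1 (r n : ℕ) (hr : 2 ≤ r) (hn : r ≤ n) :
    (edgeCount (yGraph r n) : ℝ) ≥
      (1 - 1/(r : ℝ)) * (n : ℝ)^2 / 2 - (n : ℝ)/(r : ℝ) - (r : ℝ)/8 + 1 := by
  have hr0 : 0 < r := by omega
  have hsr : n % r < r := Nat.mod_lt _ hr0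
  have hnqs : n = n / r * r + n % r := (Nat.div_add_mod' n r).symm
  have hq1 : 1 ≤ n / r := (Nat.one_le_div_iff hr0).mpr hn
  letI : DecidableRel (yGraph r n).Adj := fun a b =>
    decidable_of_iff _ (SimpleGraph.fromRel_adj _ a b).symm
  -- edge count as edgeFinset card
  have hE : edgeCount (yGraph r n) = (yGraph r n).edgeFinset.card := by
    rw [edgeCount, Set.ncard_eq_toFinset_card']
    exact congrArg Finset.card (by ext; simp)
  -- adjacency in ℕ terms
  have hAdj : ∀ a b : Fin n, (if (yGraph r n).Adj a b then 1 else 0) = FN r (↑a) (↑b) := by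
    intro a b
    have hiff : (yGraph r n).Adj a b ↔ ((a : ℕ) ≠ (b : ℕ) ∧ (RelN r ↑a ↑b ∨ RelN r ↑b ↑a)) := by
      rw [yGraph, SimpleGraph.fromRel_adj]
      constructor
      · rintro ⟨h1, h2⟩
        exact ⟨fun hv => h1 (Fin.val_injective hv), h2⟩
      · rintro ⟨h1, h2⟩
        exact ⟨fun hv => h1 (by rw [hv]), h2⟩
    rw [FN, if_congr hiff rfl rfl]
  -- 2E as a double sum over range n
  have h2card : 2 * (yGraph r n).edgeFinset.card
      = ∑ a ∈ Finset.range n, ∑ b ∈ Finset.range n, FN r a b := by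
    rw [SimpleGraph.two_mul_card_edgeFinset, Finset.card_filter, Fintype.sum_prod_type]
    calc (∑ a : Fin n, ∑ b : Fin n, if (yGraph r n).Adj a b then 1 else 0)
        = ∑ a : Fin n, ∑ b : Fin n, FN r ↑a ↑b :=
          Finset.sum_congr rfl fun a _ => Finset.sum_congr rfl fun b _ => hAdj a b
      _ = ∑ a : Fin n, ∑ b ∈ Finset.range n, FN r ↑a b :=
          Finset.sum_congr rfl fun a _ => Fin.sum_univ_eq_sum_range (fun y => FN r ↑a y) n
      _ = ∑ a ∈ Finset.range n, ∑ b ∈ Finset.range n, FN r a b :=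
          Fin.sum_univ_eq_sum_range (fun x => ∑ b ∈ Finset.range n, FN r x b) n
  -- master double-sum identity
  have hMaster : (∑ a ∈ Finset.range n, ∑ b ∈ Finset.range n, FN r a b)
      + (∑ a ∈ Finset.range n, ∑ b ∈ Finset.range n, if b % r = a % r then 1 else 0)
      + (∑ a ∈ Finset.range n, ∑ b ∈ Finset.range n,
          if a = 0 ∧ b % r = r - 1 ∧ b ≠ r - 1 then 1 else 0)
      + (∑ a ∈ Finset.range n, ∑ b ∈ Finset.range n,
          if b = 0 ∧ a % r = r - 1 ∧ a ≠ r - 1 then 1 else 0)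
      + (∑ a ∈ Finset.range n, ∑ b ∈ Finset.range n, if a = r ∧ b = r - 1 then 1 else 0)
      + (∑ a ∈ Finset.range n, ∑ b ∈ Finset.range n, if b = r ∧ a = r - 1 then 1 else 0)
      = n * n + ((∑ a ∈ Finset.range n, ∑ b ∈ Finset.range n, if a = 0 ∧ b = r then 1 else 0)
          + (∑ a ∈ Finset.range n, ∑ b ∈ Finset.range n, if a = r ∧ b = 0 then 1 else 0)) := by
    have h := Finset.sum_congr rfl (fun a (_ : a ∈ Finset.range n) =>
      Finset.sum_congr rfl (fun b (_ : b ∈ Finset.range n) => master_ineq hr a b))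
    simp only [Finset.sum_add_distrib, Finset.sum_const, Finset.card_range, smul_eq_mul,
      mul_one] at h
    omega
  -- the K count
  have hK : (∑ b ∈ Finset.range n, if b % r = r - 1 ∧ b ≠ r - 1 then 1 else 0)
      = n / r - 1 := by
    have hmem : r - 1 ∈ (Finset.range n).filter (fun b => b % r = r - 1) := by
      rw [Finset.mem_filter, Finset.mem_range]
      exact ⟨by omega, Nat.mod_eq_of_lt (by omega)⟩
    have hKset : ((Finset.range n).filter fun b => b % r = r - 1 ∧ b ≠ r - 1)
        = ((Finset.range n).filter fun b => b % r = r - 1).erase (r - 1) := by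
      ext b
      simp only [Finset.mem_filter, Finset.mem_erase, Finset.mem_range, ne_eq]
      tauto
    rw [← Finset.card_filter, hKset, Finset.card_erase_of_mem hmem,
      cnt_eq hr (r - 1) (by omega) n, if_neg (by omega)]
    omega
  -- S2
  have hS2 : (∑ a ∈ Finset.range n, ∑ b ∈ Finset.range n, if b % r = a % r then 1 else 0)
      = n * (n / r) + ((n % r) * (n / r) + n % r) := by
    have inner : ∀ a ∈ Finset.range n,
        (∑ b ∈ Finset.range n, if b % r = a % r then 1 else 0)
          = n / r + if a % r < n % r then 1 else 0 := fun a _ => by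
      rw [← Finset.card_filter]
      exact cnt_eq hr _ (Nat.mod_lt _ hr0) n
    rw [Finset.sum_congr rfl inner, Finset.sum_add_distrib, Finset.sum_const,
      Finset.card_range, smul_eq_mul]
    congr 1
    rw [← Finset.card_filter]
    rw [Finset.card_eq_sum_card_fiberwise (f := fun a => a % r) (t := Finset.range (n % r))
      (fun x hx => by
        rw [Finset.mem_coe, Finset.mem_range]
        exact (Finset.mem_filter.mp (Finset.mem_coe.mp hx)).2)]
    have fib : ∀ i ∈ Finset.range (n % r),
        (((Finset.range n).filter (fun a => a % r < n % r)).filter fun a => a % r = i).card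
          = n / r + 1 := by
      intro i hi
      rw [Finset.mem_range] at hi
      rw [Finset.filter_filter]
      have : ((Finset.range n).filter fun a => a % r < n % r ∧ a % r = i)
          = ((Finset.range n).filter fun a => a % r = i) := by
        apply Finset.filter_congr
        intro x _
        constructor
        · exact fun h => h.2
        · exact fun h => ⟨by omega, h⟩
      rw [this, cnt_eq hr i (by omega) n, if_pos hi]
      
    rw [Finset.sum_congr rfl fib, Finset.sum_const, Finset.card_range, smul_eq_mul]
    ring
  -- S3
  have hS3 : (∑ a ∈ Finset.range n, ∑ b ∈ Finset.range n,
      if a = 0 ∧ b % r = r - 1 ∧ b ≠ r - 1 then 1 else 0) = n / r - 1 := by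
    rw [Finset.sum_congr rfl (fun a _ => sum_ite_and_left (fun b => b % r = r - 1 ∧ b ≠ r - 1) 0 a)]
    rw [Finset.sum_ite_eq' (Finset.range n) 0
      (fun _ => ∑ b ∈ Finset.range n, if b % r = r - 1 ∧ b ≠ r - 1 then 1 else 0)]
    rw [if_pos (Finset.mem_range.mpr (by omega))]
    exact hK
  -- S4
  have hS4 : (∑ a ∈ Finset.range n, ∑ b ∈ Finset.range n,
      if b = 0 ∧ a % r = r - 1 ∧ a ≠ r - 1 then 1 else 0) = n / r - 1 := by
    rw [Finset.sum_congr rfl (fun a _ => sum_ite_and_right (a % r = r - 1 ∧ a ≠ r - 1) 0)]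
    rw [Finset.sum_congr rfl (fun a (_ : a ∈ Finset.range n) =>
      if_congr (and_iff_right (show (0:ℕ) < n by omega)) rfl rfl)]
    exact hK
  -- S5
  have hS5 : (∑ a ∈ Finset.range n, ∑ b ∈ Finset.range n,
      if a = r ∧ b = r - 1 then 1 else 0) = if r < n then 1 else 0 := by
    rw [Finset.sum_congr rfl (fun a _ => sum_ite_and_left (fun b => b = r - 1) r a)]
    have h1 : (∑ b ∈ Finset.range n, if b = r - 1 then 1 else 0) = 1 := by
      rw [Finset.sum_ite_eq' (Finset.range n) (r - 1) (fun _ => 1),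
        if_pos (Finset.mem_range.mpr (by omega))]
    rw [Finset.sum_congr rfl (fun a (_ : a ∈ Finset.range n) => by rw [h1])]
    rw [Finset.sum_ite_eq' (Finset.range n) r (fun _ => 1)]
    simp [Finset.mem_range]
  -- S6
  have hS6 : (∑ a ∈ Finset.range n, ∑ b ∈ Finset.range n,
      if b = r ∧ a = r - 1 then 1 else 0) = if r < n then 1 else 0 := by
    rw [Finset.sum_congr rfl (fun a _ => sum_ite_and_right (a = r - 1) r)]
    by_cases hrn : r < n
    · rw [if_pos hrn]
      rw [Finset.sum_congr rfl (fun a (_ : a ∈ Finset.range n) =>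
        if_congr (and_iff_right hrn) rfl rfl)]
      rw [Finset.sum_ite_eq' (Finset.range n) (r - 1) (fun _ => 1),
        if_pos (Finset.mem_range.mpr (by omega))]
    · rw [if_neg hrn]
      exact Finset.sum_eq_zero fun a _ => if_neg fun hh => hrn hh.1
  -- S7
  have hS7 : (∑ a ∈ Finset.range n, ∑ b ∈ Finset.range n,
      if a = 0 ∧ b = r then 1 else 0) = if r < n then 1 else 0 := by
    rw [Finset.sum_congr rfl (fun a _ => sum_ite_and_left (fun b => b = r) 0 a)]
    have h1 : (∑ b ∈ Finset.range n, if b = r then 1 else 0) = if r < n then 1 else 0 := by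
      rw [Finset.sum_ite_eq' (Finset.range n) r (fun _ => 1)]
      simp [Finset.mem_range]
    rw [Finset.sum_congr rfl (fun a (_ : a ∈ Finset.range n) => by rw [h1])]
    rw [Finset.sum_ite_eq' (Finset.range n) 0
      (fun _ => if r < n then 1 else 0), if_pos (Finset.mem_range.mpr (by omega))]
  -- S8
  have hS8 : (∑ a ∈ Finset.range n, ∑ b ∈ Finset.range n,
      if a = r ∧ b = 0 then 1 else 0) = if r < n then 1 else 0 := by
    rw [Finset.sum_congr rfl (fun a _ => sum_ite_and_left (fun b => b = 0) r a)]
    have h1 : (∑ b ∈ Finset.range n, if b = 0 then 1 else 0) = 1 := by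
      rw [Finset.sum_ite_eq' (Finset.range n) 0 (fun _ => 1),
        if_pos (Finset.mem_range.mpr (by omega))]
    rw [Finset.sum_congr rfl (fun a (_ : a ∈ Finset.range n) => by rw [h1])]
    rw [Finset.sum_ite_eq' (Finset.range n) r (fun _ => 1)]
    simp [Finset.mem_range]
  rw [hS2, hS3, hS4, hS5, hS6, hS7, hS8, ← h2card, ← hE] at hMaster
  -- final ℕ identity
  have hfinal : 2 * edgeCount (yGraph r n)
      + (n * (n / r) + ((n % r) * (n / r) + n % r) + 2 * (n / r)) = n * n + 2 := by
    by_cases hrn : r < n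
    · simp only [if_pos hrn] at hMaster; omega
    · simp only [if_neg hrn] at hMaster; omega
  -- pass to ℝ
  have hreal : 2 * (edgeCount (yGraph r n) : ℝ)
      + ((n : ℝ) * (↑(n / r) : ℝ) + ((↑(n % r) : ℝ) * ↑(n / r) + ↑(n % r)) + 2 * ↑(n / r))
      = (n : ℝ) * n + 2 := by
    exact_mod_cast hfinal
  have hqr : (n : ℝ) = (↑(n / r) : ℝ) * r + ↑(n % r) := by exact_mod_cast hnqs
  have hrpos : (0 : ℝ) < r := by positivity
  rw [ge_iff_le, ← sub_nonneg]
  have key : (edgeCount (yGraph r n) : ℝ)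
      - ((1 - 1/(r : ℝ)) * (n : ℝ)^2 / 2 - (n : ℝ)/(r : ℝ) - (r : ℝ)/8 + 1)
      = ((2 * (↑(n % r) : ℝ) - r)^2 + 8 * ↑(n % r)) / (8 * r) := by
    rw [eq_div_iff (by positivity)]
    have h : (r:ℝ) * (r:ℝ)⁻¹ = 1 := mul_inv_cancel₀ (by positivity)
    linear_combination 4*(r:ℝ)*hreal + (4*(n:ℝ)^2 + 8*n)*h
      + (4*((n:ℝ) + ↑(n % r)) + 8)*hqr
  rw [key]
  exact div_nonneg (by positivity) (by positivity)
end

section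
/- Let r ≥ 3 and k ≥ 1 be integers and n be sufficiently large. If G attains the maximum spectral radius among all non-r-partite B_{r,k}-free graphs of order n, then G is connected. -/
open SimpleGraph

noncomputable section Stmt2Aux
open SimpleGraph Matrix Finset

namespace Stmt2Proof


variable {n : ℕ}

lemma mulVec_single_old {m : Type*} (M : Matrix m (Fin n) ℝ) (j : Fin n) (x : ℝ) :
    M *ᵥ Pi.single j x = fun i => M i j * x :=
  funext fun _ => dotProduct_single _ _ _

lemma adjMat_herm (G : SimpleGraph (Fin n)) : (adjMat G).IsHermitian := by
  ext i j
  simp only [adjMat, Matrix.conjTranspose_apply, Matrix.of_apply, star_trivial]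
  rw [SimpleGraph.adj_comm]

lemma adjMat_nonneg (G : SimpleGraph (Fin n)) (i j : Fin n) : 0 ≤ adjMat G i j := by
  unfold adjMat; dsimp; split <;> norm_num

lemma adjMat_le_one (G : SimpleGraph (Fin n)) (i j : Fin n) : adjMat G i j ≤ 1 := by
  unfold adjMat; dsimp; split <;> norm_num

lemma te_apply (A : Matrix (Fin n) (Fin n) ℝ) (x : EuclideanSpace ℝ (Fin n)) (i : Fin n) :
    Matrix.toEuclideanLin A x i = A.mulVec x i := by
  rw [Matrix.toEuclideanLin_apply]

lemma inner_te (A : Matrix (Fin n) (Fin n) ℝ) (x y : EuclideanSpace ℝ (Fin n)) :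
    (inner ℝ (Matrix.toEuclideanLin A x) y : ℝ) = (A.mulVec x) ⬝ᵥ y := by
  rw [PiLp.inner_apply]
  simp [te_apply, dotProduct, mul_comm]

lemma norm_sq_eq (x : EuclideanSpace ℝ (Fin n)) : ‖x‖^2 = x ⬝ᵥ x := by
  rw [← real_inner_self_eq_norm_sq, PiLp.inner_apply]
  simp [dotProduct, sq]

/-- the sup-of-Rayleigh quantity -/
def lam (G : SimpleGraph (Fin n)) : ℝ :=
  ⨆ x : { x : EuclideanSpace ℝ (Fin n) // x ≠ 0 },
    RCLike.re (inner ℝ ((Matrix.toEuclideanLin (adjMat G)) x) (x : EuclideanSpace ℝ (Fin n)) : ℝ)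
      / ‖(x : EuclideanSpace ℝ (Fin n))‖ ^ 2

lemma key_abs (c a b : ℝ) (h0 : 0 ≤ c) (h1 : c ≤ 1) : c * a * b ≤ |b| * |a| := by
  calc c * a * b ≤ |c * a * b| := le_abs_self _
  _ = c * (|a| * |b|) := by rw [abs_mul, abs_mul, abs_of_nonneg h0]; ring
  _ ≤ 1 * (|a| * |b|) := by nlinarith [mul_nonneg (abs_nonneg a) (abs_nonneg b)]
  _ = |b| * |a| := by ring

lemma quad_le (G : SimpleGraph (Fin n)) (x : EuclideanSpace ℝ (Fin n)) :
    ((adjMat G).mulVec x) ⬝ᵥ x ≤ n * ‖x‖^2 := by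
  have h1 : ((adjMat G).mulVec x) ⬝ᵥ x ≤ (∑ i, |x i|)^2 := by
    rw [sq, Finset.sum_mul_sum]
    unfold dotProduct Matrix.mulVec dotProduct
    refine Finset.sum_le_sum fun i _ => ?_
    rw [Finset.sum_mul]
    refine Finset.sum_le_sum fun j _ => ?_
    exact key_abs _ _ _ (adjMat_nonneg G i j) (adjMat_le_one G i j)
  have h2 : (∑ i, |x i|)^2 ≤ n * ∑ i, |x i|^2 := by
    simpa using sq_sum_le_card_mul_sum_sq (s := Finset.univ) (f := fun i => |x i|)
  have h3 : (∑ i, |x i|^2 : ℝ) = ‖x‖^2 := by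
    rw [norm_sq_eq]; unfold dotProduct
    exact Finset.sum_congr rfl fun i _ => by rw [sq_abs, sq]
  calc ((adjMat G).mulVec x) ⬝ᵥ x ≤ (∑ i, |x i|)^2 := h1
  _ ≤ n * ∑ i, |x i|^2 := h2
  _ = n * ‖x‖^2 := by rw [h3]


section Eig
variable (G : SimpleGraph (Fin n))

lemma rayleigh_bdd : BddAbove (Set.range fun x : { x : EuclideanSpace ℝ (Fin n) // x ≠ 0 } =>
    RCLike.re (inner ℝ ((Matrix.toEuclideanLin (adjMat G)) x) (x : EuclideanSpace ℝ (Fin n)) : ℝ)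
      / ‖(x : EuclideanSpace ℝ (Fin n))‖ ^ 2) := by
  refine ⟨n, ?_⟩
  rintro t ⟨⟨x, hx⟩, rfl⟩
  have hpos : (0:ℝ) < ‖x‖^2 := by have := norm_pos_iff.mpr hx; positivity
  dsimp only
  rw [inner_te]
  simp only [RCLike.re_to_real]
  rw [div_le_iff₀ hpos]
  exact quad_le G x

lemma rayleigh_eig {t : ℝ} {x : EuclideanSpace ℝ (Fin n)} (hx : x ≠ 0)
    (heig : (adjMat G).mulVec x = t • (x : Fin n → ℝ)) :
    RCLike.re (inner ℝ ((Matrix.toEuclideanLin (adjMat G)) x) (x : EuclideanSpace ℝ (Fin n)) : ℝ)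
      / ‖x‖ ^ 2 = t := by
  have hpos : (0:ℝ) < ‖x‖^2 := by have := norm_pos_iff.mpr hx; positivity
  rw [inner_te, heig]
  simp only [RCLike.re_to_real]
  rw [smul_dotProduct, ← norm_sq_eq]
  field_simp
  rw [smul_eq_mul, mul_comm]

lemma eig_le_lam {t : ℝ} (ht : t ∈ {t : ℝ | ∃ x : Fin n → ℝ, x ≠ 0 ∧ (adjMat G).mulVec x = t • x}) :
    t ≤ lam G := by
  obtain ⟨x, hx, heig⟩ := ht
  have := le_ciSup (rayleigh_bdd G) (⟨WithLp.toLp 2 x, by simpa using hx⟩ : { x : EuclideanSpace ℝ (Fin n) // x ≠ 0 })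
  rw [rayleigh_eig G (x := WithLp.toLp 2 x) (by simpa using hx) heig] at this
  exact this

lemma lam_hasEigen (hn : 0 < n) :
    Module.End.HasEigenvalue (Matrix.toEuclideanLin (adjMat G)) (lam G) := by
  haveI : Nonempty (Fin n) := ⟨⟨0, hn⟩⟩
  haveI : Nontrivial (EuclideanSpace ℝ (Fin n)) := inferInstance
  have hsym := Matrix.isHermitian_iff_isSymmetric.mp (adjMat_herm G)
  simpa [lam] using hsym.hasEigenvalue_iSup_of_finiteDimensional

lemma lam_mem (hn : 0 < n) :
    lam G ∈ {t : ℝ | ∃ x : Fin n → ℝ, x ≠ 0 ∧ (adjMat G).mulVec x = t • x} := by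
  obtain ⟨v, hv⟩ := (lam_hasEigen G hn).exists_hasEigenvector
  refine ⟨v, by simpa using hv.right, ?_⟩
  have := hv.apply_eq_smul
  funext i
  rw [← te_apply, this]; rfl

lemma specRad_eq_lam (hn : 0 < n) : specRad G = lam G := by
  refine le_antisymm (csSup_le ⟨lam G, lam_mem G hn⟩ fun t ht => eig_le_lam G ht) ?_
  exact le_csSup ⟨lam G, fun t ht => eig_le_lam G ht⟩ (lam_mem G hn)

lemma rayleigh_le_specRad (hn : 0 < n) (x : EuclideanSpace ℝ (Fin n)) (hx : x ≠ 0) :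
    ((adjMat G).mulVec x) ⬝ᵥ x ≤ specRad G * ‖x‖^2 := by
  have hpos : (0:ℝ) < ‖x‖^2 := by have := norm_pos_iff.mpr hx; positivity
  have h := le_ciSup (rayleigh_bdd G) (⟨x, hx⟩ : { x : EuclideanSpace ℝ (Fin n) // x ≠ 0 })
  rw [specRad_eq_lam G hn]
  dsimp only at h
  rw [inner_te] at h
  simp only [RCLike.re_to_real] at h
  rw [div_le_iff₀ hpos] at h
  calc ((adjMat G).mulVec x) ⬝ᵥ x ≤ lam G * ‖x‖^2 := h
  _ = lam G * ‖x‖^2 := rfl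


lemma exists_nonneg_eigvec (hn : 0 < n) (G : SimpleGraph (Fin n)) :
    ∃ y : Fin n → ℝ, y ≠ 0 ∧ (∀ i, 0 ≤ y i) ∧
      (adjMat G).mulVec y = specRad G • y := by
  classical
  obtain ⟨x, hx⟩ := (lam_hasEigen G hn).exists_hasEigenvector
  have hxne : x ≠ 0 := hx.right
  have hxeq : Matrix.toEuclideanLin (adjMat G) x = lam G • x := hx.apply_eq_smul
  set y : EuclideanSpace ℝ (Fin n) := WithLp.toLp 2 (fun i => |x i| : Fin n → ℝ) with hy
  have hyx : ∀ i, y i = |x i| := fun i => rfl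
  have hysq : y ⬝ᵥ y = (x : Fin n → ℝ) ⬝ᵥ x := by
    unfold dotProduct
    refine Finset.sum_congr rfl fun i _ => ?_
    rw [hyx, ← abs_mul, abs_mul_self]
  have hnorm : ‖y‖ = ‖x‖ := by
    rw [← Real.sqrt_sq (norm_nonneg y), ← Real.sqrt_sq (norm_nonneg x),
      norm_sq_eq, norm_sq_eq, hysq]
  have hyne : y ≠ 0 := by
    intro h
    apply hxne
    have : ‖x‖ = 0 := by rw [← hnorm, h, norm_zero]
    exact norm_eq_zero.mp this
  -- quadratic form of y is at least that of x
  have hquad : ((adjMat G).mulVec x) ⬝ᵥ x ≤ ((adjMat G).mulVec y) ⬝ᵥ y := by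
    unfold dotProduct Matrix.mulVec dotProduct
    refine Finset.sum_le_sum fun i _ => ?_
    rw [Finset.sum_mul, Finset.sum_mul]
    refine Finset.sum_le_sum fun j _ => ?_
    rw [hyx, hyx]
    have h1 : x j * x i ≤ |x j| * |x i| := by
      rw [← abs_mul]; exact le_abs_self _
    have h2 := adjMat_nonneg G i j
    calc adjMat G i j * x j * x i = adjMat G i j * (x j * x i) := by ring
    _ ≤ adjMat G i j * (|x j| * |x i|) := by exact mul_le_mul_of_nonneg_left h1 h2
    _ = adjMat G i j * |x j| * |x i| := by ring
  have hxquad : ((adjMat G).mulVec x) ⬝ᵥ x = lam G * ‖x‖^2 := by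
    have : (adjMat G).mulVec x = lam G • (x : Fin n → ℝ) := by
      funext i; rw [← te_apply, hxeq]; rfl
    rw [this, smul_dotProduct, ← norm_sq_eq, smul_eq_mul]
  -- y is a maximum of the Rayleigh quotient on its sphere
  have hsym := Matrix.isHermitian_iff_isSymmetric.mp (adjMat_herm G)
  set T' := hsym.toSelfAdjoint with hT'
  have hTy : ∀ z : EuclideanSpace ℝ (Fin n),
      (T'.val : EuclideanSpace ℝ (Fin n) →L[ℝ] EuclideanSpace ℝ (Fin n)) z
        = Matrix.toEuclideanLin (adjMat G) z := fun z => rfl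
  have hmax : IsMaxOn T'.val.reApplyInnerSelf (Metric.sphere (0 : EuclideanSpace ℝ (Fin n)) ‖y‖) y := by
    intro z hz
    have hzy : ‖z‖ = ‖y‖ := by simpa using hz
    have hzpos : (0:ℝ) < ‖y‖ := norm_pos_iff.mpr hyne
    have hzne : z ≠ 0 := by
      intro h; rw [h, norm_zero] at hzy; exact (ne_of_gt hzpos) hzy.symm
    simp only [ContinuousLinearMap.reApplyInnerSelf, hTy, Set.mem_setOf_eq]
    rw [inner_te, inner_te]
    simp only [RCLike.re_to_real]
    have h1 : ((adjMat G).mulVec z) ⬝ᵥ z ≤ specRad G * ‖z‖^2 := rayleigh_le_specRad G hn z hzne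
    rw [specRad_eq_lam G hn, hzy] at h1
    refine h1.trans ?_
    rw [← hnorm] at hxquad
    rw [← hxquad] at *
    exact hquad
  have heig := T'.prop.hasEigenvector_of_isMaxOn hyne hmax
  have heval : (↑(⨆ x : { x : EuclideanSpace ℝ (Fin n) // x ≠ 0 }, T'.val.rayleighQuotient x) : ℝ) = lam G := by
    rfl
  rw [heval] at heig
  refine ⟨y, by simpa using hyne, fun i => abs_nonneg _, ?_⟩
  have := heig.apply_eq_smul
  rw [specRad_eq_lam G hn]
  funext i
  rw [← te_apply]
  have h2 : Matrix.toEuclideanLin (adjMat G) y = lam G • y := this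
  rw [h2]; rfl


lemma lt_specRad (hn : 0 < n) (G : SimpleGraph (Fin n)) (z : Fin n → ℝ) (hz : z ≠ 0)
    (c : ℝ) (hc : c * (z ⬝ᵥ z) < ((adjMat G).mulVec z) ⬝ᵥ z) : c < specRad G := by
  have hz' : (WithLp.toLp 2 z : EuclideanSpace ℝ (Fin n)) ≠ 0 := by simpa using hz
  have h := rayleigh_le_specRad G hn (WithLp.toLp 2 z) hz'
  rw [norm_sq_eq] at h
  have hpos : (0:ℝ) < z ⬝ᵥ z := by
    rw [show z ⬝ᵥ z = (WithLp.toLp 2 z).ofLp ⬝ᵥ (WithLp.toLp 2 z).ofLp from rfl, ← norm_sq_eq]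
    have h0 : (0:ℝ) < @norm (EuclideanSpace ℝ (Fin n)) _ (WithLp.toLp 2 z) := norm_pos_iff.mpr hz'
    exact pow_pos h0 2
  simp only [WithLp.ofLp_toLp] at h
  nlinarith

/-- the edge-addition matrix -/
def eMat (u v : Fin n) : Matrix (Fin n) (Fin n) ℝ :=
  Matrix.of fun i j => (if i = u then (if j = v then (1:ℝ) else 0) else 0)
    + (if i = v then (if j = u then (1:ℝ) else 0) else 0)

lemma eMat_mulVec (u v : Fin n) (z : Fin n → ℝ) :
    (eMat u v).mulVec z = fun i => (if i = u then z v else 0) + (if i = v then z u else 0) := by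
  funext i
  unfold eMat Matrix.mulVec dotProduct
  simp only [Matrix.of_apply, add_mul, Finset.sum_add_distrib, ite_mul, one_mul, zero_mul]
  congr 1
  · by_cases hi : i = u <;> simp [hi, Finset.sum_ite_eq' Finset.univ v z]
  · by_cases hi : i = v <;> simp [hi, Finset.sum_ite_eq' Finset.univ u z]

lemma eMat_quad (u v : Fin n) (z : Fin n → ℝ) :
    ((eMat u v).mulVec z) ⬝ᵥ z = z v * z u + z u * z v := by
  rw [eMat_mulVec]
  unfold dotProduct
  simp only [add_mul, Finset.sum_add_distrib, ite_mul, zero_mul]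
  rw [Finset.sum_ite_eq' Finset.univ u (fun i => z v * z i),
    Finset.sum_ite_eq' Finset.univ v (fun i => z u * z i)]
  simp

lemma adjMat_add_edge (G : SimpleGraph (Fin n)) (u v : Fin n) (hne : u ≠ v)
    (hnadj : ¬ G.Adj u v) :
    adjMat (G ⊔ SimpleGraph.fromEdgeSet {s(u,v)}) = adjMat G + eMat u v := by
  classical
  ext i j
  have hadj : (G ⊔ SimpleGraph.fromEdgeSet {s(u,v)}).Adj i j ↔
      G.Adj i j ∨ ((i = u ∧ j = v) ∨ (i = v ∧ j = u)) := by
    simp only [SimpleGraph.sup_adj, SimpleGraph.fromEdgeSet_adj, Set.mem_singleton_iff,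
      Sym2.eq_iff]
    constructor
    · rintro (h | ⟨h, -⟩)
      · exact Or.inl h
      · exact Or.inr h
    · rintro (h | h)
      · exact Or.inl h
      · refine Or.inr ⟨h, ?_⟩
        rcases h with ⟨rfl, rfl⟩ | ⟨rfl, rfl⟩
        · exact hne
        · exact hne.symm
  simp only [Matrix.add_apply, adjMat, Matrix.of_apply, eMat, hadj]
  have hGvu : ¬ G.Adj v u := fun h => hnadj h.symm
  by_cases h1 : i = u <;> by_cases h2 : j = v <;> by_cases h3 : i = v <;> by_cases h4 : j = u <;>
    simp_all <;> omega

lemma one_le_specRad (hn : 0 < n) (G : SimpleGraph (Fin n))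
    (hedge : ∃ p q, G.Adj p q) : 1 ≤ specRad G := by
  classical
  obtain ⟨p, q, hpq⟩ := hedge
  have hpq' : p ≠ q := hpq.ne
  set x : Fin n → ℝ := Pi.single p 1 + Pi.single q 1 with hx
  have hxp : x p = 1 := by
    simp [hx, Pi.single_apply, hpq', hpq'.symm]
  have hxq : x q = 1 := by
    simp [hx, Pi.single_apply, hpq', hpq'.symm]
  have hxne : x ≠ 0 := fun h => by
    have := congrFun h p; rw [hxp] at this; norm_num at this
  have hdot : x ⬝ᵥ x = 2 := by
    calc x ⬝ᵥ x = x ⬝ᵥ (Pi.single p 1 + Pi.single q 1) := by rw [← hx]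
    _ = x p * 1 + x q * 1 := by
        rw [dotProduct_add, dotProduct_single, dotProduct_single]
    _ = 2 := by rw [hxp, hxq]; norm_num
  have hquad : ((adjMat G).mulVec x) ⬝ᵥ x = 2 := by
    have h1 : (adjMat G).mulVec x p = 1 := by
      rw [hx, Matrix.mulVec_add, mulVec_single_old, mulVec_single_old]
      simp only [Pi.add_apply, mul_one]
      have : adjMat G p p = 0 := by simp [adjMat]
      have h2 : adjMat G p q = 1 := by simp [adjMat, hpq]
      rw [this, h2]; norm_num
    have h2 : (adjMat G).mulVec x q = 1 := by
      rw [hx, Matrix.mulVec_add, mulVec_single_old, mulVec_single_old]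
      simp only [Pi.add_apply, mul_one]
      have : adjMat G q q = 0 := by simp [adjMat]
      have h3 : adjMat G q p = 1 := by simp [adjMat, hpq.symm]
      rw [this, h3]; norm_num
    calc ((adjMat G).mulVec x) ⬝ᵥ x
        = (adjMat G).mulVec x ⬝ᵥ (Pi.single p 1 + Pi.single q 1) := by rw [← hx]
    _ = (adjMat G).mulVec x p * 1 + (adjMat G).mulVec x q * 1 := by
        rw [dotProduct_add, dotProduct_single, dotProduct_single]
    _ = 2 := by rw [h1, h2]; norm_num
  have h := rayleigh_le_specRad G hn (WithLp.toLp 2 x) (by simpa using hxne)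
  simp only [WithLp.ofLp_toLp] at h
  rw [norm_sq_eq, hdot, hquad] at h
  linarith

lemma exists_better (hn : 0 < n) (G : SimpleGraph (Fin n))
    (hedge : ∃ p q, G.Adj p q) (hdisc : ¬ G.Preconnected) :
    ∃ u v : Fin n, ¬ G.Reachable u v ∧
      specRad G < specRad (G ⊔ SimpleGraph.fromEdgeSet {s(u,v)}) := by
  classical
  obtain ⟨a, b, hab⟩ : ∃ a b : Fin n, ¬ G.Reachable a b := by
    by_contra h; push_neg at h; exact hdisc h
  set ρ := specRad G with hρdef
  have hρ : 1 ≤ ρ := one_le_specRad hn G hedge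
  obtain ⟨y, hyne, hypos, hyeig⟩ := exists_nonneg_eigvec hn G
  obtain ⟨u, hu⟩ : ∃ u, 0 < y u := by
    obtain ⟨i, hi⟩ := Function.ne_iff.mp hyne
    exact ⟨i, lt_of_le_of_ne (hypos i) (Ne.symm hi)⟩
  set v : Fin n := if G.Reachable u a then b else a with hv
  have hruv : ¬ G.Reachable u v := by
    rw [hv]
    split_ifs with h
    · intro h2; exact hab (h.symm.trans h2)
    · exact h
  have hne : u ≠ v := fun h => hruv (h ▸ SimpleGraph.Reachable.refl u)
  have hnadj : ¬ G.Adj u v := fun h => hruv h.reachable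
  refine ⟨u, v, hruv, ?_⟩
  set ε : ℝ := y u / ρ with hε
  have hρ0 : (0:ℝ) < ρ := by linarith
  have hεpos : 0 < ε := div_pos hu hρ0
  set δ : Fin n → ℝ := Pi.single v 1 with hδ
  set z : Fin n → ℝ := y + ε • δ with hz
  have hzu : z u = y u := by
    simp [hz, hδ, Pi.single_eq_of_ne hne]
  have hzv : z v = y v + ε := by
    simp [hz, hδ, Pi.single_eq_same]
  have hzne : z ≠ 0 := by
    intro h
    have := congrFun h v
    rw [hzv] at this
    simp only [Pi.zero_apply] at this
    have := hypos v
    linarith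
  have hAδy : ((adjMat G).mulVec δ) ⬝ᵥ y = ρ * y v := by
    have hsymm : ∀ i, adjMat G i v = adjMat G v i := fun i => by
      have := congrFun (congrFun (adjMat_herm G).eq i) v
      simpa [Matrix.conjTranspose_apply] using this.symm
    rw [hδ, mulVec_single_old]
    unfold dotProduct
    have : ∀ i, adjMat G i v * 1 * y i = adjMat G v i * y i := fun i => by
      rw [mul_one, hsymm]
    rw [Finset.sum_congr rfl fun i _ => this i]
    have : ∑ i, adjMat G v i * y i = (adjMat G).mulVec y v := rfl
    rw [this, hyeig]
    rfl
  have hAyδ : ((adjMat G).mulVec y) ⬝ᵥ δ = ρ * y v := by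
    rw [hδ, dotProduct_single, mul_one, hyeig]
    rfl
  have hAδδ : ((adjMat G).mulVec δ) ⬝ᵥ δ = 0 := by
    rw [hδ, mulVec_single_old, dotProduct_single]
    simp [adjMat]
  have hAyy : ((adjMat G).mulVec y) ⬝ᵥ y = ρ * (y ⬝ᵥ y) := by
    rw [hyeig, smul_dotProduct]; rfl
  have hquadA : ((adjMat G).mulVec z) ⬝ᵥ z
      = ρ * (y ⬝ᵥ y) + 2 * ε * ρ * y v := by
    simp only [hz, Matrix.mulVec_add, Matrix.mulVec_smul, add_dotProduct,
      dotProduct_add, smul_dotProduct, dotProduct_smul,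
      hAyy, hAyδ, hAδy, hAδδ, smul_eq_mul]
    ring
  have hδδ : δ ⬝ᵥ δ = 1 := by
    rw [hδ, dotProduct_single, Pi.single_eq_same, mul_one]
  have hyδ : y ⬝ᵥ δ = y v := by
    rw [hδ, dotProduct_single, mul_one]
  have hδy : δ ⬝ᵥ y = y v := by
    rw [hδ, single_dotProduct, one_mul]
  have hzz : z ⬝ᵥ z = y ⬝ᵥ y + 2 * ε * y v + ε * ε := by
    simp only [hz, add_dotProduct, dotProduct_add, smul_dotProduct,
      dotProduct_smul, hyδ, hδy, hδδ, smul_eq_mul]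
    ring
  have hquadE : ((eMat u v).mulVec z) ⬝ᵥ z = 2 * y u * (y v + ε) := by
    rw [eMat_quad, hzu, hzv]; ring
  have hG' : adjMat (G ⊔ SimpleGraph.fromEdgeSet {s(u,v)}) = adjMat G + eMat u v :=
    adjMat_add_edge G u v hne hnadj
  have hquad' : ((adjMat (G ⊔ SimpleGraph.fromEdgeSet {s(u,v)})).mulVec z) ⬝ᵥ z
      = ρ * (y ⬝ᵥ y) + 2 * ε * ρ * y v + 2 * y u * (y v + ε) := by
    rw [hG', Matrix.add_mulVec, add_dotProduct, hquadA, hquadE]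
  refine lt_specRad hn _ z hzne ρ ?_
  rw [hquad', hzz]
  have hρε : ρ * ε = y u := by
    rw [hε]; field_simp
  have hyv : 0 ≤ y v := hypos v
  nlinarith [mul_pos hu hεpos]

end Eig


lemma exists_third {r : ℕ} (hr : 3 ≤ r) (i j : Fin r) : ∃ m : Fin r, m ≠ i ∧ m ≠ j := by
  classical
  have h : (({i, j} : Finset (Fin r))ᶜ).Nonempty := by
    rw [← Finset.card_pos, Finset.card_compl, Fintype.card_fin]
    have : ({i, j} : Finset (Fin r)).card ≤ 2 :=
      (Finset.card_insert_le _ _).trans (by simp)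
    omega
  obtain ⟨m, hm⟩ := h
  simp only [Finset.mem_compl, Finset.mem_insert, Finset.mem_singleton, not_or] at hm
  exact ⟨m, hm.1, hm.2⟩

lemma genBook_triangle {r k : ℕ} (hr : 3 ≤ r) (a b : Fin r ⊕ Fin k)
    (hab : (genBook r k).Adj a b) : ∃ c, (genBook r k).Adj a c ∧ (genBook r k).Adj b c := by
  rcases a with i | x <;> rcases b with j | y
  · obtain ⟨m, hmi, hmj⟩ := exists_third hr i j
    exact ⟨Sum.inl m, ⟨by simp [hmi.symm], Or.inl rfl⟩, ⟨by simp [hmj.symm], Or.inl rfl⟩⟩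
  · obtain ⟨m, hmi, -⟩ := exists_third hr i i
    exact ⟨Sum.inl m, ⟨by simp [hmi.symm], Or.inl rfl⟩, ⟨by simp, Or.inr rfl⟩⟩
  · obtain ⟨m, hmj, -⟩ := exists_third hr j j
    exact ⟨Sum.inl m, ⟨by simp, Or.inr rfl⟩, ⟨by simp [hmj.symm], Or.inl rfl⟩⟩
  · exact absurd hab.2 (by simp)

lemma hfree_sup {r k n : ℕ} (hr : 3 ≤ r) {G : SimpleGraph (Fin n)} {u v : Fin n}
    (hruv : ¬ G.Reachable u v) (hfree : IsHFree (genBook r k) G) :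
    IsHFree (genBook r k) (G ⊔ SimpleGraph.fromEdgeSet {s(u,v)}) := by
  rintro ⟨f, hf⟩
  apply hfree
  refine ⟨f, fun a b hab => ?_⟩
  have h := hf a b hab
  rcases h with h' | h'
  · exact h'
  · exfalso
    rw [SimpleGraph.fromEdgeSet_adj] at h'
    have hmem := h'.1
    simp only [Set.mem_singleton_iff, Sym2.eq_iff] at hmem
    obtain ⟨c, hac, hbc⟩ := genBook_triangle hr a b hab
    have h1 := hf a c hac
    have h2 := hf b c hbc
    have hca : f c ≠ f a := fun h => hac.1 (f.injective h.symm)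
    have hcb : f c ≠ f b := fun h => hbc.1 (f.injective h.symm)
    have hGadj : ∀ w x : Fin n, x ≠ u → x ≠ v →
        (G ⊔ SimpleGraph.fromEdgeSet {s(u,v)}).Adj w x → G.Adj w x := by
      intro w x hxu hxv hwx
      rcases hwx with hwx' | hwx'
      · exact hwx'
      · rw [SimpleGraph.fromEdgeSet_adj] at hwx'
        have := hwx'.1
        simp only [Set.mem_singleton_iff, Sym2.eq_iff] at this
        rcases this with ⟨-, h2'⟩ | ⟨-, h2'⟩
        · exact absurd h2' hxv
        · exact absurd h2' hxu
    rcases hmem with ⟨hau, hbv⟩ | ⟨hav, hbu⟩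
    · have hcu : f c ≠ u := hau ▸ hca
      have hcv : f c ≠ v := hbv ▸ hcb
      have g1 : G.Adj u (f c) := hGadj u (f c) hcu hcv (hau ▸ h1)
      have g2 : G.Adj v (f c) := hGadj v (f c) hcu hcv (hbv ▸ h2)
      exact hruv (g1.reachable.trans g2.reachable.symm)
    · have hcv : f c ≠ v := hav ▸ hca
      have hcu : f c ≠ u := hbu ▸ hcb
      have g1 : G.Adj v (f c) := hGadj v (f c) hcu hcv (hav ▸ h1)
      have g2 : G.Adj u (f c) := hGadj u (f c) hcu hcv (hbu ▸ h2)
      exact hruv (g2.reachable.trans g1.reachable.symm)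


lemma has_edge {r n : ℕ} (hr : 0 < r) {G : SimpleGraph (Fin n)} (h : ¬ G.Colorable r) :
    ∃ p q, G.Adj p q := by
  by_contra hne
  push_neg at hne
  exact h ⟨SimpleGraph.Coloring.mk (fun _ => (⟨0, hr⟩ : Fin r))
    (fun {a b} hab => absurd hab (hne a b))⟩

end Stmt2Proof
end Stmt2Aux

/-- For `r ≥ 3`, `k ≥ 1` and sufficiently large `n`, a graph attaining the
maximum spectral radius among all non-`r`-partite `B_{r,k}`-free graphs of order `n`
is connected. -/
theorem stmt2 (r k : ℕ) (hr : 3 ≤ r) (hk : 1 ≤ k) :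
    ∃ n₀ : ℕ, ∀ n ≥ n₀, ∀ G : SimpleGraph (Fin n),
      IsExtremal r k n G → G.Connected := by
  refine ⟨1, fun n hn G hext => ?_⟩
  obtain ⟨hcol, hfree, hmax⟩ := hext
  have hn0 : 0 < n := hn
  have hedge : ∃ p q, G.Adj p q := Stmt2Proof.has_edge (by omega) hcol
  by_contra hconn
  have hpre : ¬ G.Preconnected := fun h => hconn ((SimpleGraph.connected_iff G).mpr ⟨h, ⟨⟨0, hn0⟩⟩⟩)
  obtain ⟨u, v, hruv, hlt⟩ := Stmt2Proof.exists_better hn0 G hedge hpre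
  have hcol' : ¬ (G ⊔ SimpleGraph.fromEdgeSet {s(u,v)}).Colorable r :=
    fun h => hcol (h.mono_left le_sup_left)
  have hfree' := Stmt2Proof.hfree_sup (k := k) hr hruv hfree
  have := hmax _ hcol' hfree'
  linarith
end

section
/- For sufficiently large n, the spectral radius of Y_3(n) satisfies ρ(Y_3(n)) > (2/3)n − 7/12. -/
open SimpleGraph

set_option linter.unnecessarySeqFocus false

open Matrix

lemma adjMat_isHermitian {n : ℕ} (G : SimpleGraph (Fin n)) : (adjMat G).IsHermitian := by
  unfold Matrix.IsHermitian
  ext i j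
  simp only [Matrix.conjTranspose_apply, adjMat, Matrix.of_apply, star_trivial]
  by_cases h : G.Adj i j
  · rw [if_pos h, if_pos (G.adj_comm i j |>.mp h)]
  · rw [if_neg h, if_neg (fun h' => h ((G.adj_comm j i).mp h'))]

lemma abs_adjMat_le {n : ℕ} (G : SimpleGraph (Fin n)) (i j : Fin n) : |adjMat G i j| ≤ 1 := by
  simp only [adjMat, Matrix.of_apply]
  by_cases h : G.Adj i j <;> simp [h]

lemma specRad_bddAbove {n : ℕ} (G : SimpleGraph (Fin n)) :
    BddAbove {t : ℝ | ∃ x : Fin n → ℝ, x ≠ 0 ∧ (adjMat G).mulVec x = t • x} := by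
  refine ⟨n, fun t ht => ?_⟩
  obtain ⟨x, hx, hxe⟩ := ht
  have hnemp : Nonempty (Fin n) := by
    by_contra h'
    exact hx (funext fun i => absurd ⟨i⟩ h')
  obtain ⟨i, -, hi⟩ := Finset.exists_max_image Finset.univ (fun i => |x i|) Finset.univ_nonempty
  have hxi : x i ≠ 0 := by
    intro h0
    apply hx
    funext j
    have := hi j (Finset.mem_univ j)
    rw [h0, abs_zero] at this
    exact abs_nonpos_iff.mp this
  have h1 : |t * x i| ≤ n * |x i| := by
    have h2 : (adjMat G).mulVec x i = t * x i := by rw [hxe]; rfl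
    rw [← h2]
    have h3 : (adjMat G).mulVec x i = ∑ j, adjMat G i j * x j := rfl
    rw [h3]
    calc |∑ j, adjMat G i j * x j| ≤ ∑ j, |adjMat G i j * x j| := Finset.abs_sum_le_sum_abs _ _
      _ ≤ ∑ _j : Fin n, |x i| := by
          refine Finset.sum_le_sum fun j _ => ?_
          rw [abs_mul]
          calc |adjMat G i j| * |x j| ≤ 1 * |x i| :=
            mul_le_mul (abs_adjMat_le G i j) (hi j (Finset.mem_univ j)) (abs_nonneg _) zero_le_one
          _ = |x i| := one_mul _
      _ = n * |x i| := by simp [Finset.sum_const, nsmul_eq_mul]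
  rw [abs_mul] at h1
  have h2 := le_of_mul_le_mul_right h1 (abs_pos.mpr hxi)
  exact le_trans (le_abs_self t) h2

lemma rayleigh_lt_specRad {n : ℕ} (G : SimpleGraph (Fin n)) (x : Fin n → ℝ) (hx : x ≠ 0)
    (c : ℝ) (h : c * (x ⬝ᵥ x) < x ⬝ᵥ ((adjMat G).mulVec x)) : c < specRad G := by
  classical
  have hnemp : Nonempty (Fin n) := by
    by_contra h'
    exact hx (funext fun i => absurd ⟨i⟩ h')
  have hA := adjMat_isHermitian G
  set A := adjMat G with hAdef
  obtain ⟨i₀, -, hi₀⟩ := Finset.exists_max_image Finset.univ hA.eigenvalues Finset.univ_nonempty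
  set μ := hA.eigenvalues i₀ with hμdef
  have hmem : μ ∈ {t : ℝ | ∃ y : Fin n → ℝ, y ≠ 0 ∧ A.mulVec y = t • y} :=
    ⟨_, (fun h => hA.eigenvectorBasis.orthonormal.ne_zero i₀ ((WithLp.ofLp_eq_zero 2).mp h)), hA.mulVec_eigenvectorBasis i₀⟩
  have hμle : μ ≤ specRad G := le_csSup (specRad_bddAbove G) hmem
  set U := (hA.eigenvectorUnitary : Matrix (Fin n) (Fin n) ℝ) with hUdef
  have hUU : U * Uᴴ = 1 := by
    have := Matrix.mem_unitaryGroup_iff.mp hA.eigenvectorUnitary.2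
    simpa [Matrix.star_eq_conjTranspose] using this
  have hspec : A = U * Matrix.diagonal hA.eigenvalues * Uᴴ := by
    have := hA.spectral_theorem
    simpa [Matrix.star_eq_conjTranspose] using this
  have hBeq : μ • (1 : Matrix (Fin n) (Fin n) ℝ) - A
      = U * Matrix.diagonal (fun i => μ - hA.eigenvalues i) * Uᴴ := by
    have hd : Matrix.diagonal (fun i => μ - hA.eigenvalues i)
        = μ • (1 : Matrix (Fin n) (Fin n) ℝ) - Matrix.diagonal hA.eigenvalues := by
      ext i j
      rcases eq_or_ne i j with rfl | hij
      · simp [Matrix.sub_apply, Matrix.smul_apply, Matrix.diagonal_apply_eq, Matrix.one_apply_eq]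
      · simp [Matrix.sub_apply, Matrix.smul_apply, Matrix.diagonal_apply_ne _ hij,
          Matrix.one_apply_ne hij]
    rw [hd, Matrix.mul_sub, Matrix.sub_mul, ← hspec]
    congr 1
    rw [Matrix.mul_smul, Matrix.smul_mul, Matrix.mul_one, hUU]
  have hPSD : (μ • (1 : Matrix (Fin n) (Fin n) ℝ) - A).PosSemidef := by
    rw [hBeq]
    exact (Matrix.PosSemidef.diagonal
      (fun i => sub_nonneg.mpr (hi₀ i (Finset.mem_univ i)))).mul_mul_conjTranspose_same U
  have hquad := hPSD.dotProduct_mulVec_nonneg x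
  have hstar : star x = x := by funext i; simp
  rw [hstar] at hquad
  have hexp : x ⬝ᵥ ((μ • (1 : Matrix (Fin n) (Fin n) ℝ) - A).mulVec x)
      = μ * (x ⬝ᵥ x) - x ⬝ᵥ (A.mulVec x) := by
    rw [Matrix.sub_mulVec, dotProduct_sub]
    congr 1
    rw [Matrix.smul_mulVec, Matrix.one_mulVec, dotProduct_smul]
    rfl
  rw [hexp] at hquad
  have hray : x ⬝ᵥ (A.mulVec x) ≤ μ * (x ⬝ᵥ x) := by linarith
  have hxx : 0 < x ⬝ᵥ x := by
    obtain ⟨i, hi⟩ := Function.ne_iff.mp hx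
    have h4 : x ⬝ᵥ x = ∑ j, x j * x j := rfl
    rw [h4]
    exact Finset.sum_pos' (fun j _ => mul_self_nonneg _)
      ⟨i, Finset.mem_univ i, mul_self_pos.mpr hi⟩
  have hcμ : c < μ := by
    have h5 : c * (x ⬝ᵥ x) < μ * (x ⬝ᵥ x) := lt_of_lt_of_le h hray
    exact (mul_lt_mul_iff_of_pos_right hxx).mp h5
  linarith




lemma count_mod_range (n r : ℕ) (hr : r < 3) :
    ((Finset.range n).filter (fun a => a % 3 = r)).card = (n + 2 - r) / 3 := by
  induction n with
  | zero => simp; omega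
  | succ n ih =>
    rw [Finset.range_add_one, Finset.filter_insert]
    by_cases h : n % 3 = r
    · rw [if_pos h, Finset.card_insert_of_notMem (by simp), ih]
      omega
    · rw [if_neg h, ih]
      omega

lemma count_mod_fin (n r : ℕ) :
    (Finset.univ.filter (fun a : Fin n => (a : ℕ) % 3 = r)).card
      = ((Finset.range n).filter (fun a => a % 3 = r)).card := by
  refine Finset.card_bij (fun a _ => (a : ℕ)) ?_ ?_ ?_
  · intro a ha
    simp only [Finset.mem_filter, Finset.mem_range]
    exact ⟨a.isLt, (Finset.mem_filter.mp ha).2⟩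
  · intro a _ b _ h
    exact Fin.val_injective h
  · intro b hb
    simp only [Finset.mem_filter, Finset.mem_range] at hb
    exact ⟨⟨b, hb.1⟩, Finset.mem_filter.mpr ⟨Finset.mem_univ _, hb.2⟩, rfl⟩

lemma ind_or {A B : Prop} [Decidable A] [Decidable B] (h : ¬(A ∧ B)) :
    (if A ∨ B then (1:ℝ) else 0) = (if A then (1:ℝ) else 0) + (if B then (1:ℝ) else 0) := by
  by_cases hA : A <;> by_cases hB : B <;> simp [hA, hB] <;> tauto

lemma ind_diff {A B : Prop} [Decidable A] [Decidable B] (h : B → A) :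
    (if A ∧ ¬B then (1:ℝ) else 0)
      = (if A then (1:ℝ) else 0) - (if B then (1:ℝ) else 0) := by
  by_cases hA : A <;> by_cases hB : B <;> simp [hA, hB] <;> tauto

lemma ind_not {A : Prop} [Decidable A] :
    (if ¬A then (1:ℝ) else 0) = 1 - (if A then (1:ℝ) else 0) := by
  by_cases hA : A <;> simp [hA]

lemma ind_id (i j : ℕ) :
    (if ((i % 3 ≠ j % 3
      ∧ ¬ (i = 0 ∧ j % 3 = 2 ∧ j ≠ 2)
      ∧ ¬ (j = 0 ∧ i % 3 = 2 ∧ i ≠ 2)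
      ∧ ¬ (i = 3 ∧ j = 2)
      ∧ ¬ (j = 3 ∧ i = 2))
      ∨ (i = 0 ∧ j = 3) ∨ (i = 3 ∧ j = 0)) then (1:ℝ) else 0) =
    1 - (if i % 3 = j % 3 then (1:ℝ) else 0)
      - (if i = 0 ∧ j % 3 = 2 ∧ j ≠ 2 then (1:ℝ) else 0)
      - (if j = 0 ∧ i % 3 = 2 ∧ i ≠ 2 then (1:ℝ) else 0)
      - (if i = 3 ∧ j = 2 then (1:ℝ) else 0)
      - (if j = 3 ∧ i = 2 then (1:ℝ) else 0)
      + (if i = 0 ∧ j = 3 then (1:ℝ) else 0)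
      + (if i = 3 ∧ j = 0 then (1:ℝ) else 0) := by
  classical
  have e1 : ((i % 3 ≠ j % 3
      ∧ ¬ (i = 0 ∧ j % 3 = 2 ∧ j ≠ 2)
      ∧ ¬ (j = 0 ∧ i % 3 = 2 ∧ i ≠ 2)
      ∧ ¬ (i = 3 ∧ j = 2)
      ∧ ¬ (j = 3 ∧ i = 2))
      ∨ (i = 0 ∧ j = 3) ∨ (i = 3 ∧ j = 0)) ↔
      ((¬(i % 3 = j % 3)
        ∧ ¬ ((i = 0 ∧ j % 3 = 2 ∧ j ≠ 2) ∨ (j = 0 ∧ i % 3 = 2 ∧ i ≠ 2)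
            ∨ (i = 3 ∧ j = 2) ∨ (j = 3 ∧ i = 2)))
        ∨ ((i = 0 ∧ j = 3) ∨ (i = 3 ∧ j = 0))) := by
    constructor
    · rintro (⟨h1, h2, h3, h4, h5⟩ | h) 
      · exact Or.inl ⟨h1, by tauto⟩
      · exact Or.inr h
    · rintro (⟨h1, h2⟩ | h)
      · exact Or.inl ⟨h1, by tauto⟩
      · exact Or.inr h
  rw [if_congr e1 rfl rfl]
  rw [ind_or (by omega), ind_diff (by omega), ind_or (by omega), ind_or (by omega),
    ind_or (by omega), ind_or (by omega), ind_not]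
  ring

lemma ind_and_mul {A B : Prop} [Decidable A] [Decidable B] :
    (if A ∧ B then (1:ℝ) else 0) = (if A then (1:ℝ) else 0) * (if B then (1:ℝ) else 0) := by
  by_cases hA : A <;> by_cases hB : B <;> simp [hA, hB]

lemma mod_split (i j : ℕ) :
    (if i % 3 = j % 3 then (1:ℝ) else 0) =
      (if i % 3 = 0 then (1:ℝ) else 0) * (if j % 3 = 0 then (1:ℝ) else 0)
      + (if i % 3 = 1 then (1:ℝ) else 0) * (if j % 3 = 1 then (1:ℝ) else 0)
      + (if i % 3 = 2 then (1:ℝ) else 0) * (if j % 3 = 2 then (1:ℝ) else 0) := by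
  have hi : i % 3 = 0 ∨ i % 3 = 1 ∨ i % 3 = 2 := by omega
  have hj : j % 3 = 0 ∨ j % 3 = 1 ∨ j % 3 = 2 := by omega
  rcases hi with hi | hi | hi <;> rcases hj with hj | hj | hj <;> simp [hi, hj]

lemma yAdj_iff (n : ℕ) (a b : Fin n) :
    (yGraph 3 n).Adj a b ↔
    (((a:ℕ) % 3 ≠ (b:ℕ) % 3
      ∧ ¬ ((a:ℕ) = 0 ∧ (b:ℕ) % 3 = 2 ∧ (b:ℕ) ≠ 2)
      ∧ ¬ ((b:ℕ) = 0 ∧ (a:ℕ) % 3 = 2 ∧ (a:ℕ) ≠ 2)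
      ∧ ¬ ((a:ℕ) = 3 ∧ (b:ℕ) = 2)
      ∧ ¬ ((b:ℕ) = 3 ∧ (a:ℕ) = 2))
      ∨ ((a:ℕ) = 0 ∧ (b:ℕ) = 3) ∨ ((a:ℕ) = 3 ∧ (b:ℕ) = 0)) := by
  rw [yGraph, SimpleGraph.fromRel_adj]
  simp only [ne_eq, Fin.ext_iff]
  generalize (a : ℕ) = i
  generalize (b : ℕ) = j
  constructor
  · rintro ⟨hne, (⟨h1,h2,h3,h4,h5⟩|h|h) | (⟨h1,h2,h3,h4,h5⟩|h|h)⟩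
    all_goals omega
  · rintro (⟨h1,h2,h3,h4,h5⟩|⟨h1,h2⟩|⟨h1,h2⟩)
    · exact ⟨by omega, Or.inl (Or.inl ⟨by omega, by omega, by omega, by omega, by omega⟩)⟩
    · exact ⟨by omega, Or.inl (Or.inr (Or.inl ⟨by omega, by omega⟩))⟩
    · exact ⟨by omega, Or.inl (Or.inr (Or.inr ⟨by omega, by omega⟩))⟩



noncomputable def xw {n : ℕ} (a : Fin n) : ℝ := if (a:ℕ) = 0 then 1/2 else 1
noncomputable def gE {n : ℕ} (r : ℕ) (a : Fin n) : ℝ :=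
  (if (a:ℕ) % 3 = r then (1:ℝ) else 0) * xw a
noncomputable def gZ {n : ℕ} (k : ℕ) (a : Fin n) : ℝ :=
  (if (a:ℕ) = k then (1:ℝ) else 0) * xw a
noncomputable def gT {n : ℕ} (a : Fin n) : ℝ :=
  (if (a:ℕ) % 3 = 2 then (1:ℝ) else 0) * ((if ¬ (a:ℕ) = 2 then (1:ℝ) else 0) * xw a)

open Classical in
lemma key_pt {n : ℕ} (a b : Fin n) :
    (if (yGraph 3 n).Adj a b then (1:ℝ) else 0) * (xw a * xw b) =
      xw a * xw b - gE 0 a * gE 0 b - gE 1 a * gE 1 b - gE 2 a * gE 2 b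
      - gZ 0 a * gT b - gT a * gZ 0 b - gZ 3 a * gZ 2 b - gZ 2 a * gZ 3 b
      + gZ 0 a * gZ 3 b + gZ 3 a * gZ 0 b := by
  classical
  rw [if_congr (yAdj_iff n a b) rfl rfl, ind_id, mod_split]
  simp only [ind_and_mul]
  unfold gE gZ gT xw
  ring

lemma sum_ind_single (n k : ℕ) (hk : k < n) (c : ℝ) :
    ∑ a : Fin n, (if (a:ℕ) = k then c else 0) = c := by
  classical
  rw [Finset.sum_eq_single_of_mem (⟨k, hk⟩ : Fin n) (Finset.mem_univ _)
    (fun b _ hb => if_neg (fun h => hb (Fin.ext h)))]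
  exact if_pos rfl

lemma sum_ind_mod (n r : ℕ) :
    ∑ a : Fin n, (if (a:ℕ) % 3 = r then (1:ℝ) else 0)
      = ((Finset.univ.filter (fun a : Fin n => (a:ℕ) % 3 = r)).card : ℝ) := by
  classical
  rw [Finset.sum_boole]

lemma sum_xw (n : ℕ) (h : 0 < n) : ∑ a : Fin n, xw a = n - 1/2 := by
  classical
  have hpt : ∀ a : Fin n, xw a = 1 - (if (a:ℕ) = 0 then (1/2:ℝ) else 0) := by
    intro a; unfold xw; by_cases ha : (a:ℕ) = 0 <;> simp [ha] <;> norm_num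
  rw [Finset.sum_congr rfl (fun a _ => hpt a), Finset.sum_sub_distrib,
    sum_ind_single n 0 h (1/2 : ℝ)]
  simp

lemma sum_xw_sq (n : ℕ) (h : 0 < n) : ∑ a : Fin n, xw a * xw a = n - 3/4 := by
  classical
  have hpt : ∀ a : Fin n, xw a * xw a = 1 - (if (a:ℕ) = 0 then (3/4:ℝ) else 0) := by
    intro a; unfold xw; by_cases ha : (a:ℕ) = 0 <;> simp [ha] <;> norm_num
  rw [Finset.sum_congr rfl (fun a _ => hpt a), Finset.sum_sub_distrib,
    sum_ind_single n 0 h (3/4 : ℝ)]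
  simp

lemma sum_gE0 (n : ℕ) (h : 0 < n) :
    ∑ a : Fin n, gE 0 a = (((n+2)/3 : ℕ) : ℝ) - 1/2 := by
  classical
  have hpt : ∀ a : Fin n, gE 0 a
      = (if (a:ℕ) % 3 = 0 then (1:ℝ) else 0) - (if (a:ℕ) = 0 then (1/2:ℝ) else 0) := by
    intro a; unfold gE xw
    by_cases ha : (a:ℕ) = 0
    · have h3 : (a:ℕ) % 3 = 0 := by omega
      simp [ha, h3]; norm_num
    · by_cases hm : (a:ℕ) % 3 = 0 <;> simp [ha, hm]
  rw [Finset.sum_congr rfl (fun a _ => hpt a), Finset.sum_sub_distrib,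
    sum_ind_single n 0 h (1/2 : ℝ), sum_ind_mod n 0, count_mod_fin, count_mod_range n 0 (by omega)]
  norm_num

lemma sum_gE12 (n : ℕ) (r : ℕ) (hr : r = 1 ∨ r = 2) :
    ∑ a : Fin n, gE r a = (((n+2-r)/3 : ℕ) : ℝ) := by
  classical
  have hpt : ∀ a : Fin n, gE r a = (if (a:ℕ) % 3 = r then (1:ℝ) else 0) := by
    intro a; unfold gE xw
    by_cases hm : (a:ℕ) % 3 = r
    · have ha : ¬ (a:ℕ) = 0 := by omega
      simp [hm, ha]
    · simp [hm]
  rw [Finset.sum_congr rfl (fun a _ => hpt a), sum_ind_mod n r, count_mod_fin,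
    count_mod_range n r (by omega)]

lemma sum_gZ (n k : ℕ) (hk : k < n) (hk0 : k ≠ 0) : ∑ a : Fin n, gZ k a = 1 := by
  classical
  have hpt : ∀ a : Fin n, gZ k a = (if (a:ℕ) = k then (1:ℝ) else 0) := by
    intro a; unfold gZ xw
    by_cases ha : (a:ℕ) = k
    · have h0 : ¬ (a:ℕ) = 0 := by omega
      simp [ha, h0]
      omega
    · simp [ha]
  rw [Finset.sum_congr rfl (fun a _ => hpt a), sum_ind_single n k hk 1]

lemma sum_gZ0 (n : ℕ) (h : 0 < n) : ∑ a : Fin n, gZ 0 a = 1/2 := by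
  classical
  have hpt : ∀ a : Fin n, gZ 0 a = (if (a:ℕ) = 0 then (1/2:ℝ) else 0) := by
    intro a; unfold gZ xw
    by_cases ha : (a:ℕ) = 0 <;> simp [ha]
  rw [Finset.sum_congr rfl (fun a _ => hpt a), sum_ind_single n 0 h (1/2:ℝ)]

lemma sum_gT (n : ℕ) (h : 2 < n) : ∑ a : Fin n, gT a = ((n/3 : ℕ) : ℝ) - 1 := by
  classical
  have hpt : ∀ a : Fin n, gT a
      = (if (a:ℕ) % 3 = 2 then (1:ℝ) else 0) - (if (a:ℕ) = 2 then (1:ℝ) else 0) := by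
    intro a; unfold gT xw
    by_cases ha : (a:ℕ) = 2
    · have h3 : (a:ℕ) % 3 = 2 := by omega
      simp [ha, h3]
    · by_cases hm : (a:ℕ) % 3 = 2
      · have h0 : ¬ (a:ℕ) = 0 := by omega
        simp [ha, hm, h0]
      · simp [ha, hm]
  rw [Finset.sum_congr rfl (fun a _ => hpt a), Finset.sum_sub_distrib,
    sum_ind_single n 2 h 1, sum_ind_mod n 2, count_mod_fin, count_mod_range n 2 (by omega),
    show (n + 2 - 2) / 3 = n / 3 by omega]


lemma rayleigh_calc (n : ℕ) (hn : 100 ≤ n) :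
    (2/3 * (n:ℝ) - 7/12) * ((xw (n := n)) ⬝ᵥ (xw (n := n)))
      < (xw (n := n)) ⬝ᵥ ((adjMat (yGraph 3 n)).mulVec (xw (n := n))) := by
  classical
  have hdotx : (xw (n := n)) ⬝ᵥ (xw (n := n)) = (n:ℝ) - 3/4 := by
    rw [show (xw (n := n)) ⬝ᵥ (xw (n := n)) = ∑ a : Fin n, xw a * xw a from rfl]
    exact sum_xw_sq n (by omega)
  have h1 : (xw (n := n)) ⬝ᵥ ((adjMat (yGraph 3 n)).mulVec (xw (n := n)))
      = ∑ a : Fin n, ∑ b : Fin n,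
          (if (yGraph 3 n).Adj a b then (1:ℝ) else 0) * (xw a * xw b) := by
    simp only [dotProduct, Matrix.mulVec, adjMat, Matrix.of_apply]
    refine Finset.sum_congr rfl fun a _ => ?_
    rw [Finset.mul_sum]
    refine Finset.sum_congr rfl fun b _ => ?_
    ring
  have h2 : ∑ a : Fin n, ∑ b : Fin n,
        (if (yGraph 3 n).Adj a b then (1:ℝ) else 0) * (xw a * xw b)
      = (∑ a : Fin n, xw a) * (∑ a : Fin n, xw a)
        - (∑ a : Fin n, gE 0 a) * (∑ a : Fin n, gE 0 a)
        - (∑ a : Fin n, gE 1 a) * (∑ a : Fin n, gE 1 a)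
        - (∑ a : Fin n, gE 2 a) * (∑ a : Fin n, gE 2 a)
        - (∑ a : Fin n, gZ 0 a) * (∑ a : Fin n, gT a)
        - (∑ a : Fin n, gT a) * (∑ a : Fin n, gZ 0 a)
        - (∑ a : Fin n, gZ 3 a) * (∑ a : Fin n, gZ 2 a)
        - (∑ a : Fin n, gZ 2 a) * (∑ a : Fin n, gZ 3 a)
        + (∑ a : Fin n, gZ 0 a) * (∑ a : Fin n, gZ 3 a)
        + (∑ a : Fin n, gZ 3 a) * (∑ a : Fin n, gZ 0 a) := by
    rw [Finset.sum_congr rfl (fun a _ => Finset.sum_congr rfl (fun b _ => key_pt a b))]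
    simp only [Finset.sum_sub_distrib, Finset.sum_add_distrib, ← Finset.mul_sum,
      ← Finset.sum_mul]
  rw [h1, h2, hdotx, sum_xw n (by omega), sum_gE0 n (by omega),
    sum_gE12 n 1 (Or.inl rfl), sum_gE12 n 2 (Or.inr rfl), sum_gZ0 n (by omega),
    sum_gZ n 3 (by omega) (by omega), sum_gZ n 2 (by omega) (by omega), sum_gT n (by omega)]
  have h3 : n % 3 = 0 ∨ n % 3 = 1 ∨ n % 3 = 2 := by omega
  have hm : 33 ≤ n / 3 := by omega
  set m := n / 3 with hmdef
  have hm' : (33:ℝ) ≤ (m:ℝ) := by exact_mod_cast hm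
  rcases h3 with h3 | h3 | h3
  · have e0 : ((n + 2) / 3) = m := by omega
    have e1 : ((n + 2 - 1) / 3) = m := by omega
    have e2 : ((n + 2 - 2) / 3) = m := by omega
    have hn' : (n:ℝ) = 3 * (m:ℝ) := by
      have h : n = 3 * m := by omega
      rw [h]; push_cast; ring
    rw [e0, e1, e2, hn']
    push_cast
    nlinarith [hm']
  · have e0 : ((n + 2) / 3) = m + 1 := by omega
    have e1 : ((n + 2 - 1) / 3) = m := by omega
    have e2 : ((n + 2 - 2) / 3) = m := by omega
    have hn' : (n:ℝ) = 3 * (m:ℝ) + 1 := by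
      have h : n = 3 * m + 1 := by omega
      rw [h]; push_cast; ring
    rw [e0, e1, e2, hn']
    push_cast
    nlinarith [hm']
  · have e0 : ((n + 2) / 3) = m + 1 := by omega
    have e1 : ((n + 2 - 1) / 3) = m + 1 := by omega
    have e2 : ((n + 2 - 2) / 3) = m := by omega
    have hn' : (n:ℝ) = 3 * (m:ℝ) + 2 := by
      have h : n = 3 * m + 2 := by omega
      rw [h]; push_cast; ring
    rw [e0, e1, e2, hn']
    push_cast
    nlinarith [hm']

/-- For sufficiently large `n`, `ρ(Y_3(n)) > (2/3)n - 7/12`. -/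
theorem stmt3 :
    ∃ n₀ : ℕ, ∀ n ≥ n₀, specRad (yGraph 3 n) > 2/3 * (n : ℝ) - 7/12 := by
  refine ⟨100, fun n hn => ?_⟩
  have h0 : (0:ℕ) < n := by omega
  have hx : (xw (n := n)) ≠ 0 := by
    intro h
    have := congrFun h ⟨0, h0⟩
    simp [xw] at this
  exact rayleigh_lt_specRad (yGraph 3 n) xw hx _ (rayleigh_calc n hn)
end

section
/- Fix integers r ≥ 3, k ≥ 1, a constant ε with 0 < ε < 1/(36 r^8), and let n be sufficiently large. Let G attain the maximum spectral radius ρ among all non-r-partite B_{r,k}-free graphs of order n, let x be the positive eigenvector of the adjacency matrix of G corresponding to ρ normalized so that its maximum entry equals 1, and let L be the set of vertices v with d(v) ≤ (1 − 1/r − 5√ε)·n. Then for each v ∈ L, one has x_v < 1 − 4√ε·n/ρ. -/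
open SimpleGraph

section Stmt11Aux

open Finset

/-- block size of the balanced Turán part of the witness graph -/
def tmm (r n : ℕ) : ℕ := (n - (r+3)) / r

/-- relation generating the witness graph: a `C₅ ∨ K_{r-2}` gadget on `[0, r+3)`,
a balanced complete `r`-partite part on `[r+3, r+3 + r·m)`, the rest isolated. -/
def wrel (r n : ℕ) (a b : ℕ) : Prop :=
  (a < 5 ∧ b < 5 ∧ (a+1) % 5 = b % 5)
  ∨ (a < r+3 ∧ 5 ≤ b ∧ b < r+3)
  ∨ (r+3 ≤ a ∧ r+3 ≤ b ∧ a < r+3 + r * tmm r n ∧ b < r+3 + r * tmm r n ∧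
      (a-(r+3)) / tmm r n ≠ (b-(r+3)) / tmm r n)

def witness (r n : ℕ) : SimpleGraph (Fin n) :=
  SimpleGraph.fromRel (fun a b => wrel r n (a:ℕ) (b:ℕ))

lemma witness_adj {r n : ℕ} {a b : Fin n} :
    (witness r n).Adj a b ↔ a ≠ b ∧ (wrel r n (a:ℕ) (b:ℕ) ∨ wrel r n (b:ℕ) (a:ℕ)) :=
  SimpleGraph.fromRel_adj _ a b

lemma card_filter_val {n : ℕ} (Q : Fin n → Prop) (P : ℕ → Prop)
    [DecidablePred Q] [DecidablePred P]
    (hQP : ∀ j : Fin n, Q j ↔ P (j:ℕ)) :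
    (Finset.univ.filter Q).card = ((Finset.range n).filter P).card := by
  classical
  apply Finset.card_bij (fun (a : Fin n) (_ : a ∈ Finset.univ.filter Q) => (a : ℕ))
  · intro a ha; simp only [mem_filter, mem_range, mem_univ, true_and] at ha ⊢
    exact ⟨a.2, (hQP a).mp ha⟩
  · intro a _ b _ h; exact Fin.ext h
  · intro b hb; simp only [mem_filter, mem_range, mem_univ, true_and] at hb
    exact ⟨⟨b, hb.1⟩, by simp [(hQP ⟨b, hb.1⟩).mpr hb.2], rfl⟩

lemma nat_div_eq_iff {m c j : ℕ} (hm : 0 < m) : j / m = c ↔ c * m ≤ j ∧ j < (c+1) * m := by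
  have h1 := Nat.div_add_mod j m
  have h3 := Nat.mod_lt j hm
  constructor
  · rintro rfl
    have e1 : j / m * m = m * (j / m) := by ring
    have e2 : (j / m + 1) * m = m * (j / m) + m := by ring
    omega
  · rintro ⟨ha, hb⟩
    rcases Nat.lt_trichotomy (j/m) c with h | h | h
    · exfalso
      have h2 : j / m + 1 ≤ c := h
      have h4 := Nat.mul_le_mul_right m h2
      have e2 : (j / m + 1) * m = m * (j / m) + m := by ring
      omega
    · exact h
    · exfalso
      have h2 : c + 1 ≤ j/m := h
      have h4 := Nat.mul_le_mul_right m h2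
      have e3 : (j/m) * m = m * (j/m) := by ring
      have e4 : (c+1) * m = c * m + m := by ring
      omega

lemma spec_bdd {n : ℕ} (G : SimpleGraph (Fin n)) :
    ∀ t ∈ {t : ℝ | ∃ x : Fin n → ℝ, x ≠ 0 ∧ (adjMat G).mulVec x = t • x}, t ≤ (n:ℝ) := by
  classical
  rintro t ⟨x, hx0, hx⟩
  rcases Nat.eq_zero_or_pos n with h0 | h0
  · subst h0
    exact absurd (funext fun v => v.elim0) hx0
  obtain ⟨i, -, hi⟩ := Finset.exists_max_image Finset.univ (fun j => |x j|)
    ⟨⟨0, h0⟩, Finset.mem_univ _⟩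
  have hipos : 0 < |x i| := by
    rcases lt_or_ge 0 |x i| with h | h
    · exact h
    · exfalso; apply hx0; funext j
      have h2 := hi j (Finset.mem_univ j)
      have h3 : |x j| ≤ 0 := le_trans h2 h
      simpa using abs_nonpos_iff.mp h3
  have heq := congrFun hx i
  have hsum : (adjMat G).mulVec x i = ∑ j, adjMat G i j * x j := rfl
  have hbound : |(adjMat G).mulVec x i| ≤ (n:ℝ) * |x i| := by
    rw [hsum]
    calc |∑ j, adjMat G i j * x j| ≤ ∑ j, |adjMat G i j * x j| :=
          Finset.abs_sum_le_sum_abs _ _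
    _ ≤ ∑ _j : Fin n, |x i| := by
          apply Finset.sum_le_sum
          intro j _
          rw [abs_mul]
          have hA : |adjMat G i j| ≤ 1 := by
            simp only [adjMat, Matrix.of_apply]
            split <;> simp
          calc |adjMat G i j| * |x j| ≤ 1 * |x i| :=
                mul_le_mul hA (hi j (Finset.mem_univ j)) (abs_nonneg _) zero_le_one
          _ = |x i| := one_mul _
    _ = (n:ℝ) * |x i| := by simp [Finset.sum_const, Finset.card_univ, nsmul_eq_mul]
  rw [heq] at hbound
  have h5 : |t| * |x i| ≤ (n:ℝ) * |x i| := by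
    rw [← abs_mul]; simpa using hbound
  have ht : |t| ≤ (n:ℝ) := le_of_mul_le_mul_right h5 hipos
  exact le_trans (le_abs_self t) ht

lemma le_specRad {n : ℕ} (G : SimpleGraph (Fin n)) {t : ℝ}
    (ht : ∃ x : Fin n → ℝ, x ≠ 0 ∧ (adjMat G).mulVec x = t • x) : t ≤ specRad G :=
  le_csSup ⟨(n:ℝ), fun _ hu => spec_bdd G _ hu⟩ ht

end Stmt11Aux

section Stmt11Eig
open Finset

/-- the Turán-part predicate -/
def turp (r n : ℕ) (j : ℕ) : Prop := r+3 ≤ j ∧ j < r+3 + r * tmm r n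

open Classical in
lemma witness_eigen {r n : ℕ} (hr : 3 ≤ r) (hm : 1 ≤ tmm r n) :
    ∃ y : Fin n → ℝ, y ≠ 0 ∧
      (adjMat (witness r n)).mulVec y = (((r-1) * tmm r n : ℕ) : ℝ) • y := by
  classical
  have hrm : r * tmm r n ≤ n - (r+3) := by
    have h := Nat.div_mul_le_self (n - (r+3)) r
    calc r * tmm r n = (n - (r+3)) / r * r := by simp only [tmm]; ring
    _ ≤ n - (r+3) := h
  have hmm : tmm r n ≤ r * tmm r n := by
    calc tmm r n = 1 * tmm r n := (one_mul _).symm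
    _ ≤ r * tmm r n := Nat.mul_le_mul_right _ (by omega)
  have hn : r + 3 + r * tmm r n ≤ n := by omega
  refine ⟨fun v => if turp r n (v:ℕ) then 1 else 0, ?_, ?_⟩
  · intro h0
    have := congrFun h0 ⟨r+3, by omega⟩
    simp only [Pi.zero_apply] at this
    rw [if_pos (by constructor <;> simp <;> omega)] at this
    exact one_ne_zero this
  · funext i
    have hsum : (adjMat (witness r n)).mulVec (fun v => if turp r n (v:ℕ) then (1:ℝ) else 0) i
        = ∑ j, (if (witness r n).Adj i j then (1:ℝ) else 0) * (if turp r n (j:ℕ) then 1 else 0) := rfl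
    rw [hsum]
    have hcomb : ∀ j : Fin n, (if (witness r n).Adj i j then (1:ℝ) else 0) * (if turp r n (j:ℕ) then 1 else 0)
        = if ((witness r n).Adj i j ∧ turp r n (j:ℕ)) then 1 else 0 := by
      intro j
      by_cases h1 : (witness r n).Adj i j <;> by_cases h2 : turp r n (j:ℕ) <;> simp [h1, h2]
    simp only [hcomb]
    rw [Finset.sum_boole]
    by_cases hi : turp r n (i:ℕ)
    · -- Turán vertex: count is (r-1)*m
      have hipart := hi
      rw [turp] at hipart
      have hmpos : 0 < tmm r n := hm
      have hcr : ((i:ℕ) - (r+3)) / tmm r n < r := by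
        rw [Nat.div_lt_iff_lt_mul hmpos]
        omega
      have hfilt : (Finset.univ.filter (fun j : Fin n => (witness r n).Adj i j ∧ turp r n (j:ℕ)))
          = Finset.univ.filter (fun j : Fin n =>
              (turp r n (j:ℕ) ∧ ((j:ℕ) - (r+3)) / tmm r n ≠ ((i:ℕ) - (r+3)) / tmm r n)) := by
        apply Finset.filter_congr
        intro j _
        constructor
        · rintro ⟨hadj, htj⟩
          refine ⟨htj, ?_⟩
          have hjpart := htj; rw [turp] at hjpart
          rcases witness_adj.mp hadj with ⟨hne, hw | hw⟩ <;>
            rcases hw with ⟨h1,h2,h3⟩|⟨h1,h2,h3⟩|⟨h1,h2,h3,h4,h5⟩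
          · exact absurd h1 (by omega)
          · exact absurd h3 (by omega)
          · exact fun hh => h5 hh.symm
          · exact absurd h2 (by omega)
          · exact absurd h3 (by omega)
          · exact h5
        · rintro ⟨htj, hcls⟩
          have hjpart := htj; rw [turp] at hjpart
          refine ⟨witness_adj.mpr ⟨?_, Or.inl ?_⟩, htj⟩
          · intro hh
            exact hcls (by rw [hh])
          · exact Or.inr (Or.inr ⟨hipart.1, hjpart.1, hipart.2, hjpart.2, fun hh => hcls hh.symm⟩)
      rw [hfilt]
      have hcv := card_filter_val
        (fun j : Fin n => turp r n (j:ℕ) ∧ ((j:ℕ) - (r+3)) / tmm r n ≠ ((i:ℕ) - (r+3)) / tmm r n)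
        (fun j => turp r n j ∧ (j - (r+3)) / tmm r n ≠ ((i:ℕ) - (r+3)) / tmm r n)
        (fun j => Iff.rfl)
      rw [hcv]
      -- now count in ℕ
      set c : ℕ := ((i:ℕ) - (r+3)) / tmm r n with hc
      have htot : ((Finset.range n).filter (fun j => turp r n j)).card = r * tmm r n := by
        have : (Finset.range n).filter (fun j => turp r n j)
            = Finset.Ico (r+3) (r+3+r*tmm r n) := by
          ext j; rw [Finset.mem_filter, Finset.mem_range, Finset.mem_Ico]; simp only [turp]; omega
        rw [this, Nat.card_Ico]; omega
      have hclass : ((Finset.range n).filter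
          (fun j => turp r n j ∧ (j - (r+3)) / tmm r n = c)).card = tmm r n := by
        have hset : (Finset.range n).filter
            (fun j => turp r n j ∧ (j - (r+3)) / tmm r n = c)
            = Finset.Ico (r+3+c*tmm r n) (r+3+c*tmm r n+tmm r n) := by
          ext j
          rw [Finset.mem_filter, Finset.mem_range, Finset.mem_Ico]; simp only [turp]
          have hcm : (c+1)*tmm r n ≤ r*tmm r n := Nat.mul_le_mul_right _ hcr
          have e1 : (c+1)*tmm r n = c*tmm r n + tmm r n := by ring
          constructor
          · rintro ⟨hj, ⟨hj1, hj2⟩, hj3⟩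
            have := (nat_div_eq_iff hmpos).mp hj3
            omega
          · intro hj
            have hdiv : (j - (r+3)) / tmm r n = c := by
              rw [nat_div_eq_iff hmpos]
              omega
            omega
        rw [hset, Nat.card_Ico]; omega
      have hsplit := Finset.card_filter_add_card_filter_not
        (s := (Finset.range n).filter (fun j => turp r n j))
        (p := fun j => (j - (r+3)) / tmm r n = c)
      rw [Finset.filter_filter, Finset.filter_filter] at hsplit
      rw [htot, hclass] at hsplit
      have hcard : ((Finset.range n).filter
          (fun j => turp r n j ∧ ¬ ((j - (r+3)) / tmm r n = c))).card = r*tmm r n - tmm r n := by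
        omega
      rw [hcard]
      rw [Pi.smul_apply, if_pos hi]
      have hsub : (r-1) * tmm r n = r*tmm r n - tmm r n := by
        have : (r-1) * tmm r n = r * tmm r n - 1 * tmm r n := by
          rw [Nat.sub_mul]
        omega
      rw [hsub]
      simp
    · -- non-Turán vertex: no Turán neighbours
      have hfilt : (Finset.univ.filter (fun j : Fin n => (witness r n).Adj i j ∧ turp r n (j:ℕ)))
          = ∅ := by
        apply Finset.filter_false_of_mem
        rintro j - ⟨hadj, htj⟩
        have hjpart := htj; rw [turp] at hjpart
        rw [turp] at hi
        have h6 : 5 < r + 3 := by omega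
        rcases witness_adj.mp hadj with ⟨hne, hw | hw⟩ <;>
          rcases hw with ⟨h1,h2,h3⟩|⟨h1,h2,h3⟩|⟨h1,h2,h3,h4,h5⟩
        · exact absurd h2 (by omega)
        · exact absurd h3 (by omega)
        · exact hi ⟨h1, h3⟩
        · exact absurd h1 (by omega)
        · exact absurd h2 (by omega)
        · exact hi ⟨h2, h4⟩
      rw [hfilt]
      rw [Pi.smul_apply, if_neg hi]
      simp

end Stmt11Eig

section Stmt11Col
open Finset

set_option maxHeartbeats 1000000 in
open Classical in
lemma witness_not_col {r n : ℕ} (hr : 3 ≤ r) (hn : r + 3 ≤ n) :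
    ¬ (witness r n).Colorable r := by
  classical
  rintro ⟨C⟩
  -- the K_{r-2} part gets r-2 distinct colours
  set Q : Finset (Fin n) := Finset.univ.filter (fun j : Fin n => 5 ≤ (j:ℕ) ∧ (j:ℕ) < r+3) with hQdef
  have hQadj : ∀ a ∈ Q, ∀ b ∈ Q, a ≠ b → (witness r n).Adj a b := by
    intro a ha b hb hab
    rw [hQdef, mem_filter] at ha hb
    exact witness_adj.mpr ⟨hab, Or.inl (Or.inr (Or.inl ⟨by omega, hb.2.1, hb.2.2⟩))⟩
  have hQcard : Q.card = r - 2 := by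
    rw [hQdef, card_filter_val (fun j : Fin n => 5 ≤ (j:ℕ) ∧ (j:ℕ) < r+3)
      (fun j => 5 ≤ j ∧ j < r+3) (fun j => Iff.rfl)]
    have : (Finset.range n).filter (fun j => 5 ≤ j ∧ j < r+3) = Finset.Ico 5 (r+3) := by
      ext j; simp only [mem_filter, mem_range, mem_Ico]; omega
    rw [this, Nat.card_Ico]
    omega
  set S : Finset (Fin r) := Q.image C with hSdef
  have hScard : S.card = r - 2 := by
    rw [hSdef, Finset.card_image_of_injOn, hQcard]
    intro a ha b hb hC
    by_contra hab
    exact C.valid (hQadj a ha b hb hab) hC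
  have hcompl : (Finset.univ \ S).card = 2 := by
    rw [Finset.card_sdiff_of_subset (Finset.subset_univ S), Finset.card_univ, Fintype.card_fin, hScard]
    omega
  obtain ⟨p, q, hpq, hS2⟩ := Finset.card_eq_two.mp hcompl
  -- the C5 vertices get colours outside S
  have h5n : ∀ i : ℕ, i < 5 → i < n := by omega
  have hC5 : ∀ (i : ℕ) (hi : i < 5), C ⟨i, h5n i hi⟩ ∈ Finset.univ \ S := by
    intro i hi
    rw [Finset.mem_sdiff]
    refine ⟨Finset.mem_univ _, ?_⟩
    intro hmem
    rw [hSdef, Finset.mem_image] at hmem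
    obtain ⟨a, ha, hCa⟩ := hmem
    rw [hQdef, mem_filter] at ha
    have hadj : (witness r n).Adj ⟨i, h5n i hi⟩ a := by
      refine witness_adj.mpr ⟨?_, Or.inl (Or.inr (Or.inl ⟨by show i < r+3; omega, ha.2.1, ha.2.2⟩))⟩
      intro hh
      have : i = (a : ℕ) := by simpa using congrArg Fin.val hh
      omega
    exact C.valid hadj hCa.symm
  -- C5 adjacencies
  have hcyc : ∀ (i j : ℕ) (hi : i < 5) (hj : j < 5), (i+1) % 5 = j % 5 →
      C ⟨i, h5n i hi⟩ ≠ C ⟨j, h5n j hj⟩ := by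
    intro i j hi hj hmod
    apply C.valid
    refine witness_adj.mpr ⟨?_, Or.inl (Or.inl ⟨hi, hj, hmod⟩)⟩
    intro hh
    have : i = j := by simpa using congrArg Fin.val hh
    omega
  have e01 := hcyc 0 1 (by omega) (by omega) (by norm_num)
  have e12 := hcyc 1 2 (by omega) (by omega) (by norm_num)
  have e23 := hcyc 2 3 (by omega) (by omega) (by norm_num)
  have e34 := hcyc 3 4 (by omega) (by omega) (by norm_num)
  have e40 := hcyc 4 0 (by omega) (by omega) (by norm_num)
  have mpq : ∀ (i : ℕ) (hi : i < 5), C ⟨i, h5n i hi⟩ = p ∨ C ⟨i, h5n i hi⟩ = q := by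
    intro i hi
    have := hC5 i hi
    rw [hS2, Finset.mem_insert, Finset.mem_singleton] at this
    exact this
  rcases mpq 0 (by omega) with h0 | h0 <;> rcases mpq 1 (by omega) with h1 | h1 <;>
    rcases mpq 2 (by omega) with h2 | h2 <;> rcases mpq 3 (by omega) with h3 | h3 <;>
    rcases mpq 4 (by omega) with h4 | h4 <;> simp_all

end Stmt11Col

section Stmt11Free
open Finset

lemma witness_free {r k n : ℕ} (hr : 3 ≤ r) (hk : 1 ≤ k) :
    IsHFree (genBook r k) (witness r n) := by
  classical
  rintro ⟨f, hf⟩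
  -- build an (r+1)-clique
  set w : Fin (r+1) → Fin n := fun i =>
    if h : (i:ℕ) < r then f (Sum.inl ⟨i, h⟩) else f (Sum.inr ⟨0, hk⟩) with hwdef
  have hadj : ∀ i j : Fin (r+1), i ≠ j → (witness r n).Adj (w i) (w j) := by
    intro i j hij
    have hvalne : (i:ℕ) ≠ (j:ℕ) := fun hh => hij (Fin.ext hh)
    by_cases hi : (i:ℕ) < r <;> by_cases hj : (j:ℕ) < r
    · have : w i = f (Sum.inl ⟨i, hi⟩) := by rw [hwdef]; simp [hi]
      rw [this]
      have : w j = f (Sum.inl ⟨j, hj⟩) := by rw [hwdef]; simp [hj]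
      rw [this]
      apply hf
      dsimp only [genBook]
      exact ⟨by simp [Fin.ext_iff]; omega, Or.inl rfl⟩
    · have h1 : w i = f (Sum.inl ⟨i, hi⟩) := by rw [hwdef]; simp [hi]
      have h2 : w j = f (Sum.inr ⟨0, hk⟩) := by rw [hwdef]; simp [hj]
      rw [h1, h2]
      apply hf
      dsimp only [genBook]
      exact ⟨by simp, Or.inl rfl⟩
    · have h1 : w i = f (Sum.inr ⟨0, hk⟩) := by rw [hwdef]; simp [hi]
      have h2 : w j = f (Sum.inl ⟨j, hj⟩) := by rw [hwdef]; simp [hj]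
      rw [h1, h2]
      apply hf
      dsimp only [genBook]
      exact ⟨by simp, Or.inr rfl⟩
    · exfalso
      have : (i:ℕ) = r := by have := i.2; omega
      have : (j:ℕ) = r := by have := j.2; omega
      omega
  -- every edge stays within the gadget or within the Turán part
  have hside : ∀ a b : Fin n, (witness r n).Adj a b →
      (((a:ℕ) < r+3 ∧ (b:ℕ) < r+3) ∨
        ((r+3 ≤ (a:ℕ) ∧ (a:ℕ) < r+3+r*tmm r n) ∧ (r+3 ≤ (b:ℕ) ∧ (b:ℕ) < r+3+r*tmm r n) ∧
          ((a:ℕ)-(r+3)) / tmm r n ≠ ((b:ℕ)-(r+3)) / tmm r n)) := by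
    intro a b hab
    rcases witness_adj.mp hab with ⟨hne, hw | hw⟩ <;>
      rcases hw with ⟨h1,h2,h3⟩|⟨h1,h2,h3⟩|⟨h1,h2,h3,h4,h5⟩
    · left; omega
    · left; omega
    · exact Or.inr ⟨⟨h1, h3⟩, ⟨h2, h4⟩, h5⟩
    · left; omega
    · left; omega
    · exact Or.inr ⟨⟨h2, h4⟩, ⟨h1, h3⟩, fun hh => h5 hh.symm⟩
  have i0 : Fin (r+1) := ⟨0, by omega⟩
  by_cases hc : (w ⟨0, by omega⟩ : ℕ) < r + 3
  · -- gadget case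
    have hall : ∀ i : Fin (r+1), (w i : ℕ) < r + 3 := by
      intro i
      by_cases h0 : i = ⟨0, by omega⟩
      · rw [h0]; exact hc
      · rcases hside _ _ (hadj ⟨0, by omega⟩ i (fun hh => h0 hh.symm)) with h | h
        · exact h.2
        · exact absurd h.1.1 (by omega)
    -- at least three C5 vertices
    have hbig : 3 ≤ (Finset.univ.filter (fun i : Fin (r+1) => (w i : ℕ) < 5)).card := by
      have hsmall : (Finset.univ.filter (fun i : Fin (r+1) => ¬ ((w i : ℕ) < 5))).card ≤ r - 2 := by
        rw [← Finset.card_range (r-2)]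
        apply Finset.card_le_card_of_injOn (fun i => (w i : ℕ) - 5) (t := Finset.range (r-2))
        · intro i hi
          simp only [Finset.coe_filter, Finset.mem_univ, true_and, Set.mem_setOf_eq] at hi
          have := hall i
          rw [Finset.mem_coe, Finset.mem_range]
          dsimp only
          omega
        · intro a ha b hb hab
          simp only [Finset.coe_filter, Finset.mem_univ, true_and, Set.mem_setOf_eq] at ha hb
          simp only at hab
          by_contra hne
          have hadj' := hadj a b hne
          have : w a ≠ w b := hadj'.ne
          have : (w a : ℕ) ≠ (w b : ℕ) := fun hh => this (Fin.ext hh)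
          omega
      have := Finset.card_filter_add_card_filter_not
        (s := (Finset.univ : Finset (Fin (r+1)))) (p := fun i => (w i : ℕ) < 5)
      rw [Finset.card_univ, Fintype.card_fin] at this
      omega
    -- extract three distinct elements
    obtain ⟨a, ha⟩ := Finset.card_pos.mp (by omega : 0 <
      (Finset.univ.filter (fun i : Fin (r+1) => (w i : ℕ) < 5)).card)
    have h2 : 0 < ((Finset.univ.filter (fun i : Fin (r+1) => (w i : ℕ) < 5)).erase a).card := by
      rw [Finset.card_erase_of_mem ha]; omega
    obtain ⟨b, hb⟩ := Finset.card_pos.mp h2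
    have h3 : 0 < (((Finset.univ.filter (fun i : Fin (r+1) => (w i : ℕ) < 5)).erase a).erase b).card := by
      rw [Finset.card_erase_of_mem hb, Finset.card_erase_of_mem ha]; omega
    obtain ⟨c, hcm⟩ := Finset.card_pos.mp h3
    have hba : b ≠ a := (Finset.mem_erase.mp hb).1
    have hcb : c ≠ b := (Finset.mem_erase.mp hcm).1
    have hca : c ≠ a := (Finset.mem_erase.mp ((Finset.mem_erase.mp hcm).2)).1
    have ha5 : (w a : ℕ) < 5 := (Finset.mem_filter.mp ha).2
    have hb5 : (w b : ℕ) < 5 := (Finset.mem_filter.mp (Finset.mem_erase.mp hb).2).2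
    have hc5 : (w c : ℕ) < 5 :=
      (Finset.mem_filter.mp (Finset.mem_erase.mp ((Finset.mem_erase.mp hcm).2)).2).2
    -- pairwise adjacency in C5 is impossible for a triangle
    have hmod : ∀ i j : Fin (r+1), i ≠ j → (w i : ℕ) < 5 → (w j : ℕ) < 5 →
        (((w i : ℕ)+1) % 5 = (w j : ℕ) % 5 ∨ ((w j : ℕ)+1) % 5 = (w i : ℕ) % 5)
          ∧ (w i : ℕ) ≠ (w j : ℕ) := by
      intro i j hij hi5 hj5
      have hadj' := hadj i j hij
      have hne : (w i : ℕ) ≠ (w j : ℕ) := fun hh => hadj'.ne (Fin.ext hh)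
      refine ⟨?_, hne⟩
      rcases witness_adj.mp hadj' with ⟨-, hw' | hw'⟩ <;>
        rcases hw' with ⟨h1,h2,h3⟩|⟨h1,h2,h3⟩|⟨h1,h2,h3,h4,h5⟩
      · exact Or.inl h3
      · exact absurd h2 (by omega)
      · exact absurd h1 (by omega)
      · exact Or.inr h3
      · exact absurd h2 (by omega)
      · exact absurd h1 (by omega)
    obtain ⟨hab', habne⟩ := hmod a b (fun hh => hba hh.symm) ha5 hb5
    obtain ⟨hac', hacne⟩ := hmod a c (fun hh => hca hh.symm) ha5 hc5
    obtain ⟨hbc', hbcne⟩ := hmod b c (fun hh => hcb hh.symm) hb5 hc5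
    omega
  · -- Turán case: r+1 distinct classes in Fin r
    have hmpos : 0 < tmm r n := by
      rcases hside _ _ (hadj ⟨0, by omega⟩ ⟨1, by omega⟩ (by simp [Fin.ext_iff])) with h | h
      · exact absurd h.1 hc
      · rcases Nat.eq_zero_or_pos (tmm r n) with h0 | h0
        · rw [h0] at h; exact absurd h.1.2 (by omega)
        · exact h0
    have hup : ∀ i : Fin (r+1), r+3 ≤ (w i : ℕ) ∧ (w i : ℕ) < r+3+r*tmm r n := by
      intro i
      by_cases h0 : i = ⟨0, by omega⟩
      · rcases hside _ _ (hadj ⟨0, by omega⟩ ⟨1, by omega⟩ (by simp [Fin.ext_iff])) with h | h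
        · exact absurd h.1 hc
        · rw [h0]; exact h.1
      · rcases hside _ _ (hadj ⟨0, by omega⟩ i (fun hh => h0 hh.symm)) with h | h
        · exact absurd h.1 hc
        · exact h.2.1
    have hcls : ∀ i j : Fin (r+1), i ≠ j →
        ((w i : ℕ)-(r+3)) / tmm r n ≠ ((w j : ℕ)-(r+3)) / tmm r n := by
      intro i j hij
      rcases hside _ _ (hadj i j hij) with h | h
      · exact absurd h.1 (by have := hup i; omega)
      · exact h.2.2
    set φ : Fin (r+1) → Fin r := fun i =>
      ⟨((w i : ℕ)-(r+3)) / tmm r n, by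
        rw [Nat.div_lt_iff_lt_mul hmpos]
        have := hup i
        omega⟩ with hφ
    have hinj : Function.Injective φ := by
      intro i j hij
      by_contra hne
      have := hcls i j hne
      rw [hφ] at hij
      simp only [Fin.mk.injEq] at hij
      exact this hij
    have := Fintype.card_le_of_injective φ hinj
    simp only [Fintype.card_fin] at this
    omega

end Stmt11Free


/-- if `x` is the positive Perron eigenvector of the spectral-extremal
graph `G`, normalized with maximum entry `1`, then every low-degree vertex `v ∈ L`
satisfies `x_v < 1 - 4√ε·n/ρ`. -/
theorem stmt11 (r k : ℕ) (hr : 3 ≤ r) (hk : 1 ≤ k) (ε : ℝ) (hε0 : 0 < ε)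
    (hε1 : ε < 1/(36 * (r : ℝ)^8)) :
    ∃ n₀ : ℕ, ∀ n ≥ n₀, ∀ G : SimpleGraph (Fin n),
      IsExtremal r k n G →
        ∀ x : Fin n → ℝ, (∀ v, 0 < x v) →
          (adjMat G).mulVec x = specRad G • x →
          (∀ v, x v ≤ 1) → (∃ v, x v = 1) →
          ∀ v ∈ Lset r ε G, x v < 1 - 4 * Real.sqrt ε * (n : ℝ) / specRad G := by
  classical
  have hs : 0 < Real.sqrt ε := Real.sqrt_pos.mpr hε0
  obtain ⟨N, hN⟩ := exists_nat_gt ((2*(r:ℝ)+6) / Real.sqrt ε)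
  refine ⟨N + 5*r + 25, ?_⟩
  intro n hn G hG x hxpos heig hxle hxmax v hv
  obtain ⟨hGcol, hGfree, hGmax⟩ := hG
  have hr0 : 0 < r := by omega
  have hnr : r + 3 + r ≤ n := by omega
  have hm1 : 1 ≤ tmm r n := by
    rw [tmm, Nat.one_le_div_iff hr0]; omega
  -- ℕ-side bounds on the Turán part size
  have hdm := Nat.div_add_mod (n - (r+3)) r
  have hmod : (n - (r+3)) % r < r := Nat.mod_lt _ hr0
  have htmm_def : tmm r n = (n - (r+3)) / r := rfl
  have hub : n ≤ r * tmm r n + 2*r + 2 := by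
    rw [htmm_def]
    set M := r * ((n - (r+3)) / r) with hM
    omega
  have hlb : r * tmm r n ≤ n - (r + 3) := by
    rw [htmm_def]
    set M := r * ((n - (r+3)) / r) with hM
    omega
  -- spectral lower bound via the witness graph
  have hspec : (((r-1) * tmm r n : ℕ) : ℝ) ≤ specRad (witness r n) :=
    le_specRad _ (witness_eigen hr hm1)
  have hmono : specRad (witness r n) ≤ specRad G :=
    hGmax (witness r n) (witness_not_col hr (by omega)) (witness_free hr hk)
  have hρ : (((r-1) * tmm r n : ℕ) : ℝ) ≤ specRad G := le_trans hspec hmono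
  -- positivity of the spectral radius
  have htwo : (2 : ℕ) ≤ (r-1) * tmm r n := by
    calc (2:ℕ) = 2 * 1 := by omega
    _ ≤ (r-1) * tmm r n := Nat.mul_le_mul (by omega) hm1
  have hρpos : 0 < specRad G := by
    calc (0:ℝ) < 2 := by norm_num
    _ ≤ (((r-1) * tmm r n : ℕ) : ℝ) := by exact_mod_cast htwo
    _ ≤ specRad G := hρ
  -- real-number estimates
  have hcast : (((r-1) * tmm r n : ℕ) : ℝ) = (r:ℝ) * (tmm r n : ℝ) - (tmm r n : ℝ) := by
    push_cast [Nat.cast_sub (by omega : 1 ≤ r)]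
    ring
  have hA : (n : ℝ) ≤ (r:ℝ) * (tmm r n : ℝ) + 2*(r:ℝ) + 2 := by exact_mod_cast hub
  have hB : (tmm r n : ℝ) * (r:ℝ) ≤ (n:ℝ) := by
    have h1 : r * tmm r n ≤ n := by omega
    have := (Nat.cast_le (α := ℝ)).mpr h1
    push_cast at this
    linarith
  have htmm_le : (tmm r n : ℝ) ≤ (n:ℝ) / (r:ℝ) := by
    rw [le_div_iff₀ (by exact_mod_cast hr0)]
    exact hB
  have hsn : 2*(r:ℝ) + 6 < Real.sqrt ε * (n:ℝ) := by
    have h1 : (2*(r:ℝ)+6) < Real.sqrt ε * (N:ℝ) := by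
      rw [div_lt_iff₀ hs] at hN
      linarith [hN]
    have h2 : (N:ℝ) ≤ (n:ℝ) := by exact_mod_cast (by omega : N ≤ n)
    nlinarith [hs]
  have hρbig : (1 - 1/(r:ℝ) - Real.sqrt ε) * (n:ℝ) < specRad G := by
    have heq : (1/(r:ℝ)) * (n:ℝ) = (n:ℝ)/(r:ℝ) := by ring
    have hρ2 : (r:ℝ) * (tmm r n : ℝ) - (tmm r n : ℝ) ≤ specRad G := by
      rw [← hcast]; exact hρ
    nlinarith [htmm_le, hA, hsn, hρ2]
  -- eigen-equation bound at v
  have hvx := congrFun heig v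
  have hsum : (adjMat G).mulVec x v = ∑ j, (if G.Adj v j then (1:ℝ) else 0) * x j := rfl
  have hdeg : ∑ j, (if G.Adj v j then (1:ℝ) else 0) = (deg G v : ℝ) := by
    rw [Finset.sum_boole]
    congr 1
    have hset : G.neighborSet v = ↑(Finset.univ.filter (G.Adj v)) := by
      ext j; simp [SimpleGraph.mem_neighborSet]
    rw [deg, hset, Set.ncard_coe_finset]
  have hxv : specRad G * x v ≤ (deg G v : ℝ) := by
    rw [Pi.smul_apply, smul_eq_mul] at hvx
    rw [← hvx, hsum, ← hdeg]
    apply Finset.sum_le_sum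
    intro j _
    by_cases hj : G.Adj v j
    · simp only [hj, if_true, one_mul]; exact hxle j
    · simp [hj]
  rw [Lset, Set.mem_setOf_eq] at hv
  have h2 : specRad G * x v < specRad G - 4 * Real.sqrt ε * (n:ℝ) := by
    have hrr : (1 - 1/(r:ℝ) - Real.sqrt ε) * (n:ℝ) - 4 * Real.sqrt ε * (n:ℝ)
        = (1 - 1/(r:ℝ) - 5 * Real.sqrt ε) * (n:ℝ) := by ring
    linarith [hxv, hv, hρbig]
  have h3 : x v < (specRad G - 4 * Real.sqrt ε * (n:ℝ)) / specRad G := by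
    rw [lt_div_iff₀ hρpos]
    linarith [h2]
  calc x v < (specRad G - 4 * Real.sqrt ε * (n:ℝ)) / specRad G := h3
  _ = 1 - 4 * Real.sqrt ε * (n:ℝ) / specRad G := by
    rw [sub_div, div_self (ne_of_gt hρpos)]
end

section
/- Fix integers r ≥ 3, k ≥ 1, a constant ε with 0 < ε < 1/(36 r^8), and let n be sufficiently large. Let G attain the maximum spectral radius among all non-r-partite B_{r,k}-free graphs of order n, and let V(G) = V_1 ∪ ⋯ ∪ V_r be a partition maximizing Σ_{1 ≤ i < j ≤ r} e(V_i, V_j), with uv the unique edge of G having both endpoints in the same part, u, v ∈ V_1. If N_{V_i}(u) ∩ N_{V_i}(v) ≠ ∅ for every i ∈ {2, …, r}, then N_{V_i}(u) ∪ N_{V_i}(v) = V_i for every i ∈ {2, …, r}. -/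
open SimpleGraph

namespace Aux
open Matrix

variable {n : ℕ}

/-- quadratic form -/
def q (A : Matrix (Fin n) (Fin n) ℝ) (z : Fin n → ℝ) : ℝ := z ⬝ᵥ A.mulVec z

lemma q_eq (A : Matrix (Fin n) (Fin n) ℝ) (z : Fin n → ℝ) :
    q A z = ∑ i, ∑ j, z i * (A i j * z j) := by
  unfold q dotProduct Matrix.mulVec dotProduct
  simp [Finset.mul_sum]

lemma q_continuous (A : Matrix (Fin n) (Fin n) ℝ) : Continuous (q A) := by
  have : q A = fun z => ∑ i, ∑ j, z i * (A i j * z j) := funext (q_eq A)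
  rw [this]
  exact continuous_finset_sum _ fun i _ => continuous_finset_sum _ fun j _ =>
    ((continuous_apply i).mul (((continuous_const).mul (continuous_apply j))))

end Aux

namespace Aux
open Matrix
variable {n : ℕ}

lemma dot_self_nonneg (z : Fin n → ℝ) : 0 ≤ z ⬝ᵥ z :=
  Finset.sum_nonneg fun i _ => mul_self_nonneg _

lemma dot_self_pos {z : Fin n → ℝ} (hz : z ≠ 0) : 0 < z ⬝ᵥ z := by
  rcases (dot_self_nonneg z).lt_or_eq with h | h
  · exact h
  · exact absurd (dotProduct_self_eq_zero.mp h.symm) hz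

lemma q_smul (A : Matrix (Fin n) (Fin n) ℝ) (c : ℝ) (z : Fin n → ℝ) :
    q A (c • z) = c^2 * q A z := by
  unfold q
  rw [Matrix.mulVec_smul, dotProduct_smul, smul_dotProduct]
  ring_nf

lemma dot_smul_self (c : ℝ) (z : Fin n → ℝ) : (c • z) ⬝ᵥ (c • z) = c^2 * (z ⬝ᵥ z) := by
  rw [dotProduct_smul, smul_dotProduct]
  simp [smul_eq_mul]; ring

/-- the sphere is compact -/
lemma sphere_compact : IsCompact {z : Fin n → ℝ | z ⬝ᵥ z = 1} := by
  have hcl : IsClosed {z : Fin n → ℝ | z ⬝ᵥ z = 1} := by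
    have : Continuous fun z : Fin n → ℝ => z ⬝ᵥ z := by
      unfold dotProduct
      exact continuous_finset_sum _ fun i _ => (continuous_apply i).mul (continuous_apply i)
    exact IsClosed.preimage this isClosed_singleton
  have hb : {z : Fin n → ℝ | z ⬝ᵥ z = 1} ⊆ Metric.closedBall 0 1 := by
    intro z hz
    simp only [Set.mem_setOf_eq] at hz
    simp only [Metric.mem_closedBall, dist_zero_right]
    apply pi_norm_le_iff_of_nonneg (by norm_num) |>.mpr
    intro i
    have h1 : z i * z i ≤ z ⬝ᵥ z := by
      unfold dotProduct
      exact Finset.single_le_sum (fun j _ => mul_self_nonneg (z j)) (Finset.mem_univ i)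
    rw [hz] at h1
    rw [Real.norm_eq_abs, abs_le]
    constructor <;> nlinarith
  exact (Metric.isCompact_of_isClosed_isBounded hcl
    (Metric.isBounded_closedBall.subset hb))

lemma quad_ineq {d C : ℝ} (h : ∀ ε : ℝ, 2 * ε * d ≤ ε^2 * C) : d = 0 := by
  by_contra hd
  have hC : C ≤ |C| := le_abs_self C
  have hC1 : (0:ℝ) < |C| + 1 := by positivity
  have h1 := h (d / (|C| + 1))
  have hd2 : 0 < d^2 := by positivity
  rw [div_pow] at h1
  have h2 : 2 * (d / (|C| + 1)) * d = 2 * d^2 / (|C|+1) := by ring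
  rw [h2] at h1
  have h3 : d ^ 2 / (|C| + 1) ^ 2 * C ≤ d^2 * |C| / (|C|+1)^2 := by
    rw [div_mul_eq_mul_div]
    apply div_le_div_of_nonneg_right ?_ (by positivity)
    · nlinarith
  have h4 : 2 * d^2 / (|C|+1) ≤ d^2 * |C| / (|C|+1)^2 := le_trans h1 h3
  rw [div_le_div_iff₀ (by positivity) (by positivity)] at h4
  nlinarith

end Aux

namespace Aux
open Matrix
variable {n : ℕ}

lemma dot_mulVec_symm {A : Matrix (Fin n) (Fin n) ℝ} (hsym : ∀ i j, A i j = A j i)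
    (y w : Fin n → ℝ) : y ⬝ᵥ A.mulVec w = w ⬝ᵥ A.mulVec y := by
  unfold dotProduct Matrix.mulVec dotProduct
  simp only [Finset.mul_sum]
  rw [Finset.sum_comm]
  apply Finset.sum_congr rfl; intro i _
  apply Finset.sum_congr rfl; intro j _
  rw [hsym j i]; ring

lemma q_add_single {A : Matrix (Fin n) (Fin n) ℝ} (hsym : ∀ i j, A i j = A j i)
    (y : Fin n → ℝ) (a : Fin n) (ε : ℝ) :
    q A (y + ε • (Pi.single a 1 : Fin n → ℝ)) =
      q A y + 2 * ε * (A.mulVec y a) + ε^2 * A a a := by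
  have hw : A.mulVec (Pi.single a (1:ℝ)) = fun i => A i a := by
    funext i
    rw [Matrix.mulVec_single]
    simp
  unfold q
  rw [Matrix.mulVec_add, dotProduct_add, add_dotProduct,
    add_dotProduct, Matrix.mulVec_smul, dotProduct_smul,
    smul_dotProduct, smul_dotProduct, dotProduct_smul]
  have h1 : y ⬝ᵥ A.mulVec (Pi.single a 1) = (Pi.single a (1:ℝ)) ⬝ᵥ A.mulVec y :=
    dot_mulVec_symm hsym _ _
  have h2 : (Pi.single a (1:ℝ)) ⬝ᵥ A.mulVec y = A.mulVec y a := by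
    rw [single_dotProduct]; ring
  have h3 : (Pi.single a (1:ℝ)) ⬝ᵥ A.mulVec (Pi.single a 1) = A a a := by
    rw [hw, single_dotProduct]; ring
  rw [h1, h2, h3]
  simp only [smul_eq_mul]
  ring

lemma dot_add_single (y : Fin n → ℝ) (a : Fin n) (ε : ℝ) :
    (y + ε • (Pi.single a 1 : Fin n → ℝ)) ⬝ᵥ (y + ε • (Pi.single a 1 : Fin n → ℝ)) =
      y ⬝ᵥ y + 2 * ε * y a + ε^2 := by
  rw [dotProduct_add, add_dotProduct, add_dotProduct,
    dotProduct_smul, smul_dotProduct, smul_dotProduct,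
    dotProduct_smul]
  rw [single_dotProduct, dotProduct_single]
  have : Pi.single a (1:ℝ) ⬝ᵥ Pi.single a 1 = 1 := by
    rw [single_dotProduct]; simp
  rw [this]
  simp only [smul_eq_mul]
  ring

lemma eigen_of_max {A : Matrix (Fin n) (Fin n) ℝ} (hsym : ∀ i j, A i j = A j i)
    {μ : ℝ} (hb : ∀ z, q A z ≤ μ * (z ⬝ᵥ z)) {y : Fin n → ℝ}
    (heq : q A y = μ * (y ⬝ᵥ y)) : A.mulVec y = μ • y := by
  funext a
  show A.mulVec y a = (μ • y) a
  simp only [Pi.smul_apply, smul_eq_mul]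
  have hd : A.mulVec y a - μ * y a = 0 := by
    apply quad_ineq (C := μ - A a a)
    intro ε
    have h1 := hb (y + ε • (Pi.single a 1 : Fin n → ℝ))
    rw [q_add_single hsym, dot_add_single] at h1
    rw [heq] at h1
    nlinarith [h1]
  linarith

end Aux

namespace Aux
open Matrix
variable {n : ℕ}

lemma adj_symm' (G : SimpleGraph (Fin n)) (i j : Fin n) : adjMat G i j = adjMat G j i := by
  unfold adjMat
  by_cases h : G.Adj i j
  · simp [h, h.symm]
  · have h' : ¬ G.Adj j i := fun hh => h hh.symm
    simp [h, h']

lemma adj_nonneg (G : SimpleGraph (Fin n)) (i j : Fin n) : 0 ≤ adjMat G i j := by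
  unfold adjMat
  by_cases h : G.Adj i j <;> simp [h]

theorem spec_exists (G : SimpleGraph (Fin n)) (hn : 0 < n) :
    ∃ y : Fin n → ℝ, (∀ i, 0 ≤ y i) ∧ y ≠ 0 ∧
      (adjMat G).mulVec y = specRad G • y ∧
      ∀ z : Fin n → ℝ, q (adjMat G) z ≤ specRad G * (z ⬝ᵥ z) := by
  set A := adjMat G with hA
  have hsym : ∀ i j, A i j = A j i := adj_symm' G
  -- sphere nonempty
  have hz0 : ((Pi.single ⟨0, hn⟩ 1 : Fin n → ℝ)) ⬝ᵥ (Pi.single ⟨0, hn⟩ 1 : Fin n → ℝ) = 1 := by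
    rw [single_dotProduct]; simp
  obtain ⟨v, hvS, hvmax⟩ := sphere_compact.exists_isMaxOn (s := {z : Fin n → ℝ | z ⬝ᵥ z = 1})
    ⟨_, hz0⟩ (q_continuous A).continuousOn
  simp only [Set.mem_setOf_eq] at hvS
  set μ := q A v with hμ
  -- Rayleigh bound
  have hb : ∀ z : Fin n → ℝ, q A z ≤ μ * (z ⬝ᵥ z) := by
    intro z
    by_cases hz : z = 0
    · subst hz
      have : q A 0 = 0 := by unfold q; rw [zero_dotProduct]
      rw [this, zero_dotProduct, mul_zero]
    · have ht : 0 < z ⬝ᵥ z := dot_self_pos hz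
      set c : ℝ := (Real.sqrt (z ⬝ᵥ z))⁻¹ with hc
      have hsq : Real.sqrt (z ⬝ᵥ z) ^ 2 = z ⬝ᵥ z := Real.sq_sqrt ht.le
      have hc2 : c ^ 2 = (z ⬝ᵥ z)⁻¹ := by rw [hc, inv_pow, hsq]
      have hmem : (c • z) ⬝ᵥ (c • z) = 1 := by
        rw [dot_smul_self, hc2, inv_mul_cancel₀ ht.ne']
      have h1 : q A (c • z) ≤ μ := hvmax hmem
      rw [q_smul, hc2] at h1
      have h2 := mul_le_mul_of_nonneg_left h1 ht.le
      calc q A z = (z ⬝ᵥ z) * ((z ⬝ᵥ z)⁻¹ * q A z) := by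
            field_simp
        _ ≤ (z ⬝ᵥ z) * μ := h2
        _ = μ * (z ⬝ᵥ z) := mul_comm _ _
  have hv0 : v ≠ 0 := by
    intro h; rw [h, zero_dotProduct] at hvS; norm_num at hvS
  have hveig : A.mulVec v = μ • v := by
    apply eigen_of_max hsym hb
    rw [hvS, mul_one]
  -- specRad G = μ
  have hspec : specRad G = μ := by
    apply IsGreatest.csSup_eq
    constructor
    · exact ⟨v, hv0, hveig⟩
    · rintro t ⟨x, hx0, hxe⟩
      have hq : q A x = t * (x ⬝ᵥ x) := by
        unfold q; rw [hxe, dotProduct_smul]; simp [smul_eq_mul]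
      have := hb x
      rw [hq] at this
      exact le_of_mul_le_mul_right (by linarith [this]) (dot_self_pos hx0)
  -- nonnegative eigenvector
  set y : Fin n → ℝ := fun i => |v i| with hy
  have hyy : y ⬝ᵥ y = 1 := by
    rw [← hvS]
    unfold dotProduct
    exact Finset.sum_congr rfl fun i _ => abs_mul_abs_self (v i)
  have hqy : q A v ≤ q A y := by
    rw [q_eq, q_eq]
    apply Finset.sum_le_sum; intro i _
    apply Finset.sum_le_sum; intro j _
    have h1 : v i * (A i j * v j) ≤ |v i * (A i j * v j)| := le_abs_self _
    have h2 : |v i * (A i j * v j)| = |v i| * (A i j * |v j|) := by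
      rw [abs_mul, abs_mul, abs_of_nonneg (adj_nonneg G i j)]
    rw [h2] at h1; exact h1
  have hyeq : q A y = μ * (y ⬝ᵥ y) := by
    rw [hyy, mul_one]
    have := hb y
    rw [hyy, mul_one] at this
    linarith
  have hyeig : A.mulVec y = μ • y := eigen_of_max hsym hb hyeq
  refine ⟨y, fun i => abs_nonneg _, ?_, ?_, ?_⟩
  · intro h; rw [h, zero_dotProduct] at hyy; norm_num at hyy
  · rw [hspec]; exact hyeig
  · rw [hspec]; exact hb

end Aux

namespace Aux
open Matrix
variable {n : ℕ}

/-- the matrix of a single (symmetric) pair -/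
def pairMat (a b : Fin n) : Matrix (Fin n) (Fin n) ℝ :=
  Matrix.of fun i j => if (i = a ∧ j = b) ∨ (i = b ∧ j = a) then (1:ℝ) else 0

lemma q_add_mat (A B : Matrix (Fin n) (Fin n) ℝ) (z : Fin n → ℝ) :
    q (A + B) z = q A z + q B z := by
  unfold q
  rw [Matrix.add_mulVec, dotProduct_add]

lemma pairMat_mulVec (a b : Fin n) (hab : a ≠ b) (z : Fin n → ℝ) :
    (pairMat a b).mulVec z = fun i => if i = a then z b else if i = b then z a else 0 := by
  funext i
  unfold pairMat Matrix.mulVec dotProduct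
  have hterm : ∀ j : Fin n,
      ((Matrix.of fun i j => if (i = a ∧ j = b) ∨ (i = b ∧ j = a) then (1:ℝ) else 0) i j) * z j
      = (if i = a ∧ j = b then z j else 0) + (if i = b ∧ j = a then z j else 0) := by
    intro j
    simp only [Matrix.of_apply]
    by_cases h1 : i = a ∧ j = b
    · have h2 : ¬ (i = b ∧ j = a) := by
        rintro ⟨hb', _⟩; exact hab (h1.1 ▸ hb')
      simp [h1, h2, hab, Ne.symm hab]
    · by_cases h2 : i = b ∧ j = a
      · simp [h1, h2, hab, Ne.symm hab]
      · have : ¬ ((i = a ∧ j = b) ∨ (i = b ∧ j = a)) := by rintro (h | h); exacts [h1 h, h2 h]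
        simp [this, h1, h2]
  rw [Finset.sum_congr rfl (fun j _ => hterm j), Finset.sum_add_distrib]
  have hs1 : (∑ j : Fin n, if i = a ∧ j = b then z j else 0) = if i = a then z b else 0 := by
    by_cases hi : i = a
    · simp only [hi, true_and]
      rw [Finset.sum_ite_eq' Finset.univ b z]
      simp
    · simp [hi]
  have hs2 : (∑ j : Fin n, if i = b ∧ j = a then z j else 0) = if i = b then z a else 0 := by
    by_cases hi : i = b
    · simp only [hi, true_and]
      rw [Finset.sum_ite_eq' Finset.univ a z]
      simp
    · simp [hi]
  rw [hs1, hs2]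
  by_cases hi : i = a
  · have : i ≠ b := fun h => hab (hi ▸ h)
    simp [hi, this, hab]
  · by_cases hib : i = b <;> simp [hi, hib, Ne.symm hab]

lemma q_pairMat (a b : Fin n) (hab : a ≠ b) (z : Fin n → ℝ) :
    q (pairMat a b) z = 2 * (z a * z b) := by
  unfold q
  rw [pairMat_mulVec a b hab]
  unfold dotProduct
  have : ∀ i : Fin n, z i * (if i = a then z b else if i = b then z a else 0)
      = (if i = a then z a * z b else 0) + (if i = b then z b * z a else 0) := by
    intro i
    by_cases hia : i = a
    · subst hia; simp [hab]
    · by_cases hib : i = b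
      · subst hib; simp [hia]
      · simp [hia, hib]
  rw [Finset.sum_congr rfl (fun i _ => this i), Finset.sum_add_distrib]
  rw [Finset.sum_ite_eq' Finset.univ a (fun _ => z a * z b),
    Finset.sum_ite_eq' Finset.univ b (fun _ => z b * z a)]
  simp; ring

lemma adjMat_diag (G : SimpleGraph (Fin n)) (a : Fin n) : adjMat G a a = 0 := by
  unfold adjMat; simp

lemma adjMat_add_edge (G G₂ : SimpleGraph (Fin n)) (a b : Fin n) (hab : a ≠ b)
    (hnadj : ¬ G.Adj a b)
    (hadj2 : ∀ x y, G₂.Adj x y ↔ G.Adj x y ∨ (x = a ∧ y = b) ∨ (x = b ∧ y = a)) :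
    adjMat G₂ = adjMat G + pairMat a b := by
  funext i j
  unfold adjMat pairMat
  simp only [Matrix.add_apply, Matrix.of_apply]
  by_cases hG : G.Adj i j
  · have h2 : G₂.Adj i j := (hadj2 i j).mpr (Or.inl hG)
    have hp : ¬ ((i = a ∧ j = b) ∨ (i = b ∧ j = a)) := by
      rintro (⟨h1, h2'⟩ | ⟨h1, h2'⟩)
      · subst h1; subst h2'; exact hnadj hG
      · subst h1; subst h2'; exact hnadj hG.symm
    simp [h2, hG, hp]
  · by_cases hp : (i = a ∧ j = b) ∨ (i = b ∧ j = a)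
    · have h2 : G₂.Adj i j := (hadj2 i j).mpr (Or.inr hp)
      simp [h2, hG, hp]
    · have h2 : ¬ G₂.Adj i j := by
        rw [hadj2 i j]; rintro (h | h); exact hG h; exact hp h
      simp [h2, hG, hp]

theorem spec_lt (G G₂ : SimpleGraph (Fin n)) (hn : 0 < n) (a b : Fin n) (hab : a ≠ b)
    (hnadj : ¬ G.Adj a b)
    (hadj2 : ∀ x y, G₂.Adj x y ↔ G.Adj x y ∨ (x = a ∧ y = b) ∨ (x = b ∧ y = a))
    (y : Fin n → ℝ) (hynn : ∀ i, 0 ≤ y i) (hy0 : y ≠ 0)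
    (heig : (adjMat G).mulVec y = specRad G • y) (hyb : 0 < y b) :
    specRad G < specRad G₂ := by
  set lam := specRad G with hlam
  obtain ⟨_, _, _, _, hb2⟩ := spec_exists G₂ hn
  set δ : ℝ := y b / (|lam| + 1) with hδ
  have hδpos : 0 < δ := by
    apply div_pos hyb; positivity
  set z : Fin n → ℝ := y + δ • (Pi.single a 1 : Fin n → ℝ) with hz
  have hza : z a = y a + δ := by
    simp [hz, Pi.single_apply]
  have hzb : z b = y b := by
    simp [hz, Pi.single_apply, Ne.symm hab]
  -- quadratic form of G₂ at z
  have hq2 : q (adjMat G₂) z = q (adjMat G) z + 2 * (z a * z b) := by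
    rw [adjMat_add_edge G G₂ a b hab hnadj hadj2, q_add_mat, q_pairMat a b hab]
  have hqz : q (adjMat G) z = lam * (y ⬝ᵥ y) + 2 * δ * (lam * y a) := by
    rw [hz, q_add_single (adj_symm' G) y a δ, adjMat_diag]
    have h1 : q (adjMat G) y = lam * (y ⬝ᵥ y) := by
      unfold q; rw [heig, dotProduct_smul]; simp [smul_eq_mul]
    have h2 : (adjMat G).mulVec y a = lam * y a := by
      rw [heig]; simp [smul_eq_mul]
    rw [h1, h2]; ring
  have hzz : z ⬝ᵥ z = y ⬝ᵥ y + 2 * δ * y a + δ^2 := by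
    rw [hz]; exact dot_add_single y a δ
  have hkey : lam * (z ⬝ᵥ z) < q (adjMat G₂) z := by
    rw [hq2, hqz, hzz, hza, hzb]
    have hlabs : lam ≤ |lam| := le_abs_self lam
    have hδle : |lam| * δ < y b := by
      rw [hδ]
      have : |lam| / (|lam| + 1) < 1 := by
        rw [div_lt_one (by positivity)]; linarith
      calc |lam| * (y b / (|lam| + 1)) = (|lam| / (|lam|+1)) * y b := by ring
        _ < 1 * y b := by
            apply mul_lt_mul_of_pos_right this hyb
        _ = y b := one_mul _
    have hya : 0 ≤ y a := hynn a
    nlinarith [sq_nonneg δ, hδpos]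
  have hzz_pos : 0 < z ⬝ᵥ z := by
    rw [hzz]
    have := dot_self_nonneg y
    nlinarith [hynn a, hδpos]
  have hfin := lt_of_lt_of_le hkey (hb2 z)
  exact lt_of_mul_lt_mul_right (by linarith [hfin]) (dot_self_nonneg z)

end Aux



namespace Aux

lemma gb_adj_iff {r k : ℕ} (x y : Fin r ⊕ Fin k) :
    (genBook r k).Adj x y ↔ x ≠ y ∧ (x.isLeft = true ∨ y.isLeft = true) := Iff.rfl

lemma gb_adj_ll {r k : ℕ} {l l' : Fin r} (h : l ≠ l') :
    (genBook r k).Adj (Sum.inl l) (Sum.inl l') :=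
  ⟨fun hh => h (Sum.inl_injective hh), Or.inl rfl⟩

lemma gb_adj_lr {r k : ℕ} (l : Fin r) (p : Fin k) :
    (genBook r k).Adj (Sum.inl l) (Sum.inr p) :=
  ⟨Sum.inl_ne_inr, Or.inl rfl⟩

/-- Adding an edge between two vertices with no common neighbour preserves
`B_{r,k}`-freeness (since every edge of the book lies in a triangle). -/
lemma hfree_add_no_common {r k n : ℕ} (hr : 3 ≤ r)
    {G G₂ : SimpleGraph (Fin n)} (hfree : IsHFree (genBook r k) G)
    {a b : Fin n} (hab : a ≠ b)
    (hadj2 : ∀ x y, G₂.Adj x y ↔ G.Adj x y ∨ (x = a ∧ y = b) ∨ (x = b ∧ y = a))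
    (hcom : ∀ t, ¬ (G.Adj a t ∧ G.Adj b t)) :
    IsHFree (genBook r k) G₂ := by
  rintro ⟨f, hf⟩
  by_cases hnew : ∃ x y, (genBook r k).Adj x y ∧
      ((f x = a ∧ f y = b) ∨ (f x = b ∧ f y = a))
  case neg =>
    apply hfree
    refine ⟨f, fun x y hxy => ?_⟩
    rcases (hadj2 (f x) (f y)).mp (hf x y hxy) with h | h | h
    · exact h
    · exact absurd ⟨x, y, hxy, Or.inl h⟩ hnew
    · exact absurd ⟨x, y, hxy, Or.inr h⟩ hnew
  case pos =>
  obtain ⟨x, y, hxy, hpair⟩ := hnew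
  -- a third vertex of the book adjacent to both `x` and `y`
  have hl : ∃ l : Fin r, (Sum.inl l : Fin r ⊕ Fin k) ≠ x ∧ (Sum.inl l : Fin r ⊕ Fin k) ≠ y := by
    have h3 : 3 ≤ r := hr
    set l0 : Fin r := ⟨0, by omega⟩ with hl0
    set l1 : Fin r := ⟨1, by omega⟩ with hl1
    set l2 : Fin r := ⟨2, by omega⟩ with hl2
    have h01 : l0 ≠ l1 := by simp [hl0, hl1, Fin.ext_iff]
    have h02 : l0 ≠ l2 := by simp [hl0, hl2, Fin.ext_iff]
    have h12 : l1 ≠ l2 := by simp [hl1, hl2, Fin.ext_iff]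
    by_cases e0x : (Sum.inl l0 : Fin r ⊕ Fin k) = x
    · by_cases e1y : (Sum.inl l1 : Fin r ⊕ Fin k) = y
      · refine ⟨l2, fun h => ?_, fun h => ?_⟩
        · exact h02 (Sum.inl_injective (h.trans e0x.symm)).symm
        · exact h12 (Sum.inl_injective (h.trans e1y.symm)).symm
      · refine ⟨l1, fun h => ?_, e1y⟩
        exact h01 (Sum.inl_injective (h.trans e0x.symm)).symm
    · by_cases e0y : (Sum.inl l0 : Fin r ⊕ Fin k) = y
      · by_cases e1x : (Sum.inl l1 : Fin r ⊕ Fin k) = x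
        · refine ⟨l2, fun h => ?_, fun h => ?_⟩
          · exact h12 (Sum.inl_injective (h.trans e1x.symm)).symm
          · exact h02 (Sum.inl_injective (h.trans e0y.symm)).symm
        · refine ⟨l1, e1x, fun h => ?_⟩
          exact h01 (Sum.inl_injective (h.trans e0y.symm)).symm
      · exact ⟨l0, e0x, e0y⟩
  obtain ⟨l, hlx, hly⟩ := hl
  have hadjx : (genBook r k).Adj x (Sum.inl l) := ⟨fun h => hlx h.symm, Or.inr rfl⟩
  have hadjy : (genBook r k).Adj y (Sum.inl l) := ⟨fun h => hly h.symm, Or.inr rfl⟩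
  set t := f (Sum.inl l) with ht
  have htx : G₂.Adj (f x) t := hf _ _ hadjx
  have hty : G₂.Adj (f y) t := hf _ _ hadjy
  have htnex : t ≠ f x := fun h => hlx (f.injective h)
  have htney : t ≠ f y := fun h => hly (f.injective h)
  have hGx : G.Adj (f x) t := by
    rcases (hadj2 (f x) t).mp htx with h | ⟨h1, h2⟩ | ⟨h1, h2⟩
    · exact h
    · -- f x = a, t = b
      rcases hpair with ⟨p1, p2⟩ | ⟨p1, p2⟩
      · exact absurd (h2.trans p2.symm) htney
      · exact absurd (p1.symm.trans h1) hab.symm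
    · -- f x = b, t = a
      rcases hpair with ⟨p1, p2⟩ | ⟨p1, p2⟩
      · exact absurd (p1.symm.trans h1) hab
      · exact absurd (h2.trans p2.symm) htney
  have hGy : G.Adj (f y) t := by
    rcases (hadj2 (f y) t).mp hty with h | ⟨h1, h2⟩ | ⟨h1, h2⟩
    · exact h
    · rcases hpair with ⟨p1, p2⟩ | ⟨p1, p2⟩
      · exact absurd (p2.symm.trans h1) hab.symm
      · exact absurd (h2.trans p1.symm) htnex
    · rcases hpair with ⟨p1, p2⟩ | ⟨p1, p2⟩
      · exact absurd (h2.trans p1.symm) htnex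
      · exact absurd (p2.symm.trans h1) hab
  rcases hpair with ⟨p1, p2⟩ | ⟨p1, p2⟩
  · exact hcom t ⟨p1 ▸ hGx, p2 ▸ hGy⟩
  · exact hcom t ⟨p2 ▸ hGy, p1 ▸ hGx⟩

/-- Adding the edge `uw` (with `w` in a different part, non-adjacent to both `u` and
`v`) preserves `B_{r,k}`-freeness, given that `uv` is the unique edge inside a part. -/
lemma hfree_add_uw {r k n : ℕ} (hr : 3 ≤ r) (hk : 1 ≤ k)
    {G G₂ : SimpleGraph (Fin n)} (hfree : IsHFree (genBook r k) G)
    {P : Fin n → Fin r} {u v w : Fin n}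
    (huv : G.Adj u v) (hPuv : P u = P v) (hPw : P w ≠ P u)
    (huw : ¬ G.Adj u w) (hvw : ¬ G.Adj v w)
    (huniq : ∀ a b, G.Adj a b → P a = P b → (a = u ∧ b = v) ∨ (a = v ∧ b = u))
    (hadj2 : ∀ x y, G₂.Adj x y ↔ G.Adj x y ∨ (x = u ∧ y = w) ∨ (x = w ∧ y = u)) :
    IsHFree (genBook r k) G₂ := by
  rintro ⟨f, hf⟩
  have hwu : w ≠ u := fun h => hPw (by rw [h])
  have hwv : w ≠ v := fun h => hPw (by rw [h, ← hPuv])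
  have hvu : v ≠ u := fun h => G.irrefl (h ▸ huv)
  have huniq₂ : ∀ a b, G₂.Adj a b → P a = P b →
      (a = u ∧ b = v) ∨ (a = v ∧ b = u) := by
    intro a b hab hP
    rcases (hadj2 a b).mp hab with h | ⟨ha, hb⟩ | ⟨ha, hb⟩
    · exact huniq a b h hP
    · exact absurd (hb ▸ ha ▸ hP.symm) hPw
    · exact absurd (hb ▸ ha ▸ hP) hPw
  set c : Fin r → Fin n := fun l => f (Sum.inl l) with hc
  have hcinj : Function.Injective c := fun l l' h => Sum.inl_injective (f.injective h)
  have hclique : ∀ l l', l ≠ l' → G₂.Adj (c l) (c l') := fun l l' h => hf _ _ (gb_adj_ll h)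
  have hpage : ∀ (l : Fin r) (p : Fin k), G₂.Adj (c l) (f (Sum.inr p)) :=
    fun l p => hf _ _ (gb_adj_lr l p)
  have hpage_ne_c : ∀ (p : Fin k) (l : Fin r), f (Sum.inr p) ≠ c l :=
    fun p l h => Sum.inr_ne_inl (f.injective h)
  by_cases hnew : ∃ x y, (genBook r k).Adj x y ∧
      ((f x = u ∧ f y = w) ∨ (f x = w ∧ f y = u))
  case neg =>
    apply hfree
    refine ⟨f, fun x y hxy => ?_⟩
    rcases (hadj2 (f x) (f y)).mp (hf x y hxy) with h | h | h
    · exact h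
    · exact absurd ⟨x, y, hxy, Or.inl h⟩ hnew
    · exact absurd ⟨x, y, hxy, Or.inr h⟩ hnew
  case pos =>
  obtain ⟨x, y, hxy, hpair⟩ := hnew
  -- Scenario 1: both `u` and `w` are clique vertices.
  have hS1 : ∀ lu lw : Fin r, c lu = u → c lw = w → False := by
    intro lu lw hcu hcw
    have hvnot : ∀ l, c l ≠ v := by
      intro l hl
      by_cases hllw : l = lw
      · exact hwv (by rw [← hcw, ← hllw, hl])
      · have hadj := hclique l lw hllw
        rw [hl, hcw] at hadj
        rcases (hadj2 v w).mp hadj with h | ⟨h1, _⟩ | ⟨h1, _⟩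
        · exact hvw h
        · exact hvu h1
        · exact hwv h1.symm
    have hPcinj : Function.Injective (P ∘ c) := by
      intro l l' h
      by_contra hne
      rcases huniq₂ (c l) (c l') (hclique l l' hne) h with ⟨_, h2⟩ | ⟨h1, _⟩
      · exact hvnot l' h2
      · exact hvnot l h1
    have hPsurj := Finite.injective_iff_surjective.mp hPcinj
    set s := f (Sum.inr ⟨0, hk⟩) with hs
    obtain ⟨ls, hls⟩ := hPsurj (P s)
    have hadj_s : G₂.Adj (c ls) s := hpage ls ⟨0, hk⟩
    rcases huniq₂ (c ls) s hadj_s hls with ⟨_, h2⟩ | ⟨h1, _⟩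
    · -- s = v, but v is not adjacent to w
      have hadjws := hpage lw ⟨0, hk⟩
      rw [hcw, ← hs, h2] at hadjws
      rcases (hadj2 w v).mp hadjws with h | ⟨h1, _⟩ | ⟨_, h2'⟩
      · exact hvw h.symm
      · exact hwu h1
      · exact hvu h2'
    · exact hvnot ls h1
  -- Scenario 2: `u` is a clique vertex and `w` is a page.
  have hS2 : ∀ (lu : Fin r) (pw : Fin k), c lu = u → f (Sum.inr pw) = w → False := by
    intro lu pw hcu hw
    have hvnot : ∀ l, c l ≠ v := by
      intro l hl
      have hadj := hpage l pw
      rw [hl, hw] at hadj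
      rcases (hadj2 v w).mp hadj with h | ⟨h1, _⟩ | ⟨h1, _⟩
      · exact hvw h
      · exact hvu h1
      · exact hwv h1.symm
    have hwnotc : ∀ l, c l ≠ w := fun l hl => hpage_ne_c pw l (by rw [hw, ← hl])
    set d : Fin r → Fin n := fun l => if l = lu then w else c l with hd
    have hdinj : Function.Injective d := by
      intro l l' h
      by_cases h1 : l = lu <;> by_cases h2 : l' = lu
      · rw [h1, h2]
      · simp only [hd, if_pos h1, if_neg h2] at h
        exact absurd h.symm (hwnotc l')
      · simp only [hd, if_neg h1, if_pos h2] at h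
        exact absurd h (hwnotc l)
      · simp only [hd, if_neg h1, if_neg h2] at h
        exact hcinj h
    have hdadj : ∀ l l', l ≠ l' → G₂.Adj (d l) (d l') := by
      intro l l' hne
      by_cases h1 : l = lu <;> by_cases h2 : l' = lu
      · exact absurd (h1.trans h2.symm) hne
      · simp only [hd, if_pos h1, if_neg h2]
        exact (hw ▸ hpage l' pw).symm
      · simp only [hd, if_neg h1, if_pos h2]
        exact hw ▸ hpage l pw
      · simp only [hd, if_neg h1, if_neg h2]
        exact hclique l l' hne
    have hvnotd : ∀ l, d l ≠ v := by
      intro l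
      by_cases h1 : l = lu
      · simp only [hd, if_pos h1]; exact hwv
      · simp only [hd, if_neg h1]; exact hvnot l
    have hPdinj : Function.Injective (P ∘ d) := by
      intro l l' h
      by_contra hne
      rcases huniq₂ (d l) (d l') (hdadj l l' hne) h with ⟨_, h2⟩ | ⟨h1, _⟩
      · exact hvnotd l' h2
      · exact hvnotd l h1
    obtain ⟨l₁, hl₁⟩ := Finite.injective_iff_surjective.mp hPdinj (P u)
    have hl₁lu : l₁ ≠ lu := by
      intro h
      apply hPw
      have : (P ∘ d) lu = P w := by simp [hd]
      rw [← h, hl₁] at this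
      exact this.symm ▸ rfl
    have hdl₁ : d l₁ = c l₁ := by simp [hd, hl₁lu]
    have hcl₁u : c l₁ ≠ u := by
      intro h
      rw [← hcu] at h
      exact hl₁lu (hcinj h)
    have hadjc : G₂.Adj (c l₁) u := by
      have := hclique l₁ lu hl₁lu
      rw [hcu] at this
      exact this
    have hP : P (c l₁) = P u := by
      have := hl₁
      simp only [Function.comp] at this
      rw [hdl₁] at this
      exact this
    rcases huniq₂ (c l₁) u hadjc hP with ⟨h1, _⟩ | ⟨h1, _⟩
    · exact hcl₁u h1
    · exact hvnot l₁ h1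
  -- Scenario 3: `w` is a clique vertex and `u` is a page.
  have hS3 : ∀ (lw : Fin r) (pu : Fin k), c lw = w → f (Sum.inr pu) = u → False := by
    intro lw pu hcw hu
    have hunotc : ∀ l, c l ≠ u := fun l hl => hpage_ne_c pu l (by rw [hu, ← hl])
    have hvnot : ∀ l, c l ≠ v := by
      intro l hl
      by_cases hllw : l = lw
      · exact hwv (by rw [← hcw, ← hllw, hl])
      · have hadj := hclique l lw hllw
        rw [hl, hcw] at hadj
        rcases (hadj2 v w).mp hadj with h | ⟨h1, _⟩ | ⟨h1, _⟩
        · exact hvw h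
        · exact hvu h1
        · exact hwv h1.symm
    have hPcinj : Function.Injective (P ∘ c) := by
      intro l l' h
      by_contra hne
      rcases huniq₂ (c l) (c l') (hclique l l' hne) h with ⟨h1, _⟩ | ⟨h1, _⟩
      · exact hunotc l h1
      · exact hvnot l h1
    obtain ⟨l₁, hl₁⟩ := Finite.injective_iff_surjective.mp hPcinj (P u)
    have hadjc : G₂.Adj (c l₁) u := by
      have := hpage l₁ pu
      rw [hu] at this
      exact this
    rcases huniq₂ (c l₁) u hadjc hl₁ with ⟨h1, _⟩ | ⟨h1, _⟩
    · exact hunotc l₁ h1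
    · exact hvnot l₁ h1
  -- dispatch on the shapes of `x` and `y`
  rcases x with lx | px <;> rcases y with ly | py
  · rcases hpair with ⟨h1, h2⟩ | ⟨h1, h2⟩
    · exact hS1 lx ly h1 h2
    · exact hS1 ly lx h2 h1
  · rcases hpair with ⟨h1, h2⟩ | ⟨h1, h2⟩
    · exact hS2 lx py h1 h2
    · exact hS3 lx py h1 h2
  · rcases hpair with ⟨h1, h2⟩ | ⟨h1, h2⟩
    · exact hS3 ly px h2 h1
    · exact hS2 ly px h2 h1
  · rcases hxy with ⟨_, h | h⟩ <;> simp at h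

/-- adjacency in `G` plus one extra edge -/
lemma sup_edge_adj {n : ℕ} (G : SimpleGraph (Fin n)) (a b : Fin n) (hab : a ≠ b) :
    ∀ x y, (G ⊔ SimpleGraph.fromEdgeSet {s(a, b)}).Adj x y ↔
      G.Adj x y ∨ (x = a ∧ y = b) ∨ (x = b ∧ y = a) := by
  intro x y
  rw [SimpleGraph.sup_adj, SimpleGraph.fromEdgeSet_adj]
  simp only [Set.mem_singleton_iff, Sym2.eq_iff]
  constructor
  · rintro (h | ⟨(⟨h1, h2⟩ | ⟨h1, h2⟩), _⟩)
    · exact Or.inl h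
    · exact Or.inr (Or.inl ⟨h1, h2⟩)
    · exact Or.inr (Or.inr ⟨h1, h2⟩)
  · rintro (h | ⟨h1, h2⟩ | ⟨h1, h2⟩)
    · exact Or.inl h
    · exact Or.inr ⟨Or.inl ⟨h1, h2⟩, by rw [h1, h2]; exact hab⟩
    · exact Or.inr ⟨Or.inr ⟨h1, h2⟩, by rw [h1, h2]; exact hab.symm⟩

end Aux

/-- let `uv` be the unique edge of `G` inside a part, with `u, v ∈ V₁`.
If `N_{Vᵢ}(u) ∩ N_{Vᵢ}(v) ≠ ∅` for every part `i ≠ 1`, then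
`N_{Vᵢ}(u) ∪ N_{Vᵢ}(v) = Vᵢ` for every such `i`. -/
theorem stmt18 (r k : ℕ) (hr : 3 ≤ r) (hk : 1 ≤ k) (ε : ℝ) (hε0 : 0 < ε)
    (hε1 : ε < 1/(36 * (r : ℝ)^8)) :
    ∃ n₀ : ℕ, ∀ n ≥ n₀, ∀ G : SimpleGraph (Fin n),
      IsExtremal r k n G →
        ∀ P : Fin n → Fin r, MaxCrossPartition G P →
          ∀ u v : Fin n, G.Adj u v →
            P u = ⟨0, by omega⟩ → P v = ⟨0, by omega⟩ →
            (∀ a b : Fin n, G.Adj a b → P a = P b →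
              (a = u ∧ b = v) ∨ (a = v ∧ b = u)) →
            (∀ i : Fin r, i ≠ P u →
              (G.neighborSet u ∩ G.neighborSet v ∩ P ⁻¹' {i}).Nonempty) →
            ∀ i : Fin r, i ≠ P u →
              (G.neighborSet u ∩ P ⁻¹' {i}) ∪ (G.neighborSet v ∩ P ⁻¹' {i})
                = P ⁻¹' {i} := by
  refine ⟨1, fun n hn G hext P hmax u v huv hPu hPv huniq hcom i hi => ?_⟩
  obtain ⟨hncol, hfree, hmaxspec⟩ := hext
  have hn1 : 0 < n := Fin.pos u
  have hPuv : P u = P v := by rw [hPu, hPv]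
  apply Set.eq_of_subset_of_subset
  · rintro w (⟨_, hw⟩ | ⟨_, hw⟩) <;> exact hw
  · intro w hw
    simp only [Set.mem_preimage, Set.mem_singleton_iff] at hw
    by_contra hnot
    simp only [Set.mem_union, Set.mem_inter_iff, SimpleGraph.mem_neighborSet,
      Set.mem_preimage, Set.mem_singleton_iff] at hnot
    push_neg at hnot
    obtain ⟨hnu, hnv⟩ := hnot
    have huw : ¬ G.Adj u w := fun h => hnu h hw
    have hvw : ¬ G.Adj v w := fun h => hnv h hw
    have hPwu : P w ≠ P u := by rw [hw]; exact hi
    obtain ⟨y, hynn, hy0, heig, hb⟩ := Aux.spec_exists G hn1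
    have hzero_prop : ∀ t, y t = 0 → ∀ z, G.Adj t z → y z = 0 := by
      intro t ht z hz
      have h1 := congrFun heig t
      have h2 : (adjMat G).mulVec y t = 0 := by
        rw [h1]
        simp [ht]
      have hsum : ∑ j, adjMat G t j * y j = 0 := h2
      have h3 : ∀ j ∈ Finset.univ, 0 ≤ adjMat G t j * y j := fun j _ =>
        mul_nonneg (Aux.adj_nonneg G t j) (hynn j)
      have h4 := (Finset.sum_eq_zero_iff_of_nonneg h3).mp hsum z (Finset.mem_univ z)
      have h6 : adjMat G t z = 1 := by simp [adjMat, hz]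
      rw [h6, one_mul] at h4
      exact h4
    by_cases hyu : y u = 0
    · -- the eigenvector vanishes at `u`: add an edge from `u` to a vertex of
      -- positive weight; no common neighbour, so the graph stays book-free.
      obtain ⟨cc, hcc⟩ : ∃ cc, y cc ≠ 0 := by
        by_contra hall
        push_neg at hall
        exact hy0 (funext fun t => hall t)
      have hycc : 0 < y cc := lt_of_le_of_ne (hynn cc) (Ne.symm hcc)
      have hccu : u ≠ cc := fun h => hcc (h ▸ hyu)
      have hnadj : ¬ G.Adj u cc := fun h => hcc (hzero_prop u hyu cc h)
      set G₂ := G ⊔ SimpleGraph.fromEdgeSet {s(u, cc)} with hG₂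
      have hadj2 := Aux.sup_edge_adj G u cc hccu
      have hcomm : ∀ t, ¬ (G.Adj u t ∧ G.Adj cc t) := by
        rintro t ⟨h1, h2⟩
        exact hcc (hzero_prop t (hzero_prop u hyu t h1) cc h2.symm)
      have hfree₂ := Aux.hfree_add_no_common hr hfree hccu hadj2 hcomm
      have hncol₂ : ¬ G₂.Colorable r := fun h => hncol (h.mono_left le_sup_left)
      have hle := hmaxspec G₂ hncol₂ hfree₂
      have hlt := Aux.spec_lt G G₂ hn1 u cc hccu hnadj hadj2 y hynn hy0 heig hycc
      linarith
    · -- the eigenvector is positive at `u`: add the edge `uw`, which keeps the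
      -- graph book-free and strictly increases the spectral radius.
      have hyu' : 0 < y u := lt_of_le_of_ne (hynn u) (Ne.symm hyu)
      have hwu : w ≠ u := fun h => hPwu (by rw [h])
      set G₂ := G ⊔ SimpleGraph.fromEdgeSet {s(w, u)} with hG₂
      have hadj2 := Aux.sup_edge_adj G w u hwu
      have hadj2' : ∀ x z, G₂.Adj x z ↔
          G.Adj x z ∨ (x = u ∧ z = w) ∨ (x = w ∧ z = u) := by
        intro x z
        rw [hadj2 x z]
        tauto
      have hfree₂ := Aux.hfree_add_uw hr hk hfree huv hPuv hPwu huw hvw huniq hadj2'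
      have hncol₂ : ¬ G₂.Colorable r := fun h => hncol (h.mono_left le_sup_left)
      have hle := hmaxspec G₂ hncol₂ hfree₂
      have hnadjwu : ¬ G.Adj w u := fun h => huw h.symm
      have hlt := Aux.spec_lt G G₂ hn1 w u hwu hnadjwu hadj2 y hynn hy0 heig hyu'
      linarith
end
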